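/- arXiv:0805.1006 — 5 statements merged into one kernel-verified Lean document; each statement's English description precedes it below -/
import Mathlib

section
/- Let 𝒢 be a profinite group with an open pro-p subgroup, k a finite field of characteristic p, and V a smooth k-representation of 𝒢. Then V is admissible if and only if Hom_𝒢(S, V) is finite dimensional for every irreducible smooth k-representation S of 𝒢. -/
section SmoothRepDefs

variable {k : Type} [Field k] {G : Type} [Group G] [TopologicalSpace G]

/-- A subgroup `P` of a profinite group is *pro-p* if every open subgroup has
`p`-power (in particular finite) relative index in `P`. -/
def IsProP (p : ℕ) (P : Subgroup G) : Prop :=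
  ∀ Q : Subgroup G, IsOpen (Q : Set G) → ∃ m : ℕ, Q.relIndex P = p ^ m

/-- A representation `ρ` of a topological group `G` is *smooth* if every vector
has open stabilizer. -/
def IsSmoothRep {V : Type} [AddCommGroup V] [Module k V] (ρ : G →* V →ₗ[k] V) : Prop :=
  ∀ v : V, IsOpen {g : G | ρ g v = v}

/-- The subspace of `P`-invariant vectors. -/
def invariants {V : Type} [AddCommGroup V] [Module k V] (ρ : G →* V →ₗ[k] V)
    (P : Subgroup G) : Submodule k V where
  carrier := {v | ∀ g ∈ P, ρ g v = v}
  add_mem' := fun {a b} ha hb g hg => by simp [map_add, ha g hg, hb g hg]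
  zero_mem' := fun g hg => map_zero _
  smul_mem' := fun c v hv g hg => by simp [map_smul, hv g hg]

/-- A smooth representation is *admissible* if the invariants under every open
pro-p subgroup are finite dimensional. -/
def IsAdmissibleRep (p : ℕ) {V : Type} [AddCommGroup V] [Module k V]
    (ρ : G →* V →ₗ[k] V) : Prop :=
  ∀ P : Subgroup G, IsOpen (P : Set G) → IsProP p P →
    FiniteDimensional k (invariants ρ P)

/-- Irreducibility: `V` is nonzero and has no invariant subspaces besides `⊥`, `⊤`. -/
def IsIrrRep {V : Type} [AddCommGroup V] [Module k V] (ρ : G →* V →ₗ[k] V) : Prop :=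
  Nontrivial V ∧ ∀ U : Submodule k V, (∀ g v, v ∈ U → ρ g v ∈ U) → U = ⊥ ∨ U = ⊤

/-- The space `Hom_G(A, B)` of equivariant linear maps. -/
def equivHom {A B : Type} [AddCommGroup A] [Module k A] [AddCommGroup B] [Module k B]
    (ρA : G →* A →ₗ[k] A) (ρB : G →* B →ₗ[k] B) : Submodule k (A →ₗ[k] B) where
  carrier := {f | ∀ g a, f (ρA g a) = ρB g (f a)}
  add_mem' := fun {f₁ f₂} h₁ h₂ g a => by simp [h₁ g a, h₂ g a, map_add]
  zero_mem' := fun g a => by simp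
  smul_mem' := fun c f hf g a => by simp [hf g a, map_smul]

end SmoothRepDefs

section Helpers

variable {k : Type} [Field k] {G : Type} [Group G] [TopologicalSpace G]
variable {V : Type} [AddCommGroup V] [Module k V]

/-- The stabilizer of a vector, as a subgroup. -/
def repStab (ρ : G →* V →ₗ[k] V) (v : V) : Subgroup G where
  carrier := {g | ρ g v = v}
  one_mem' := by simp
  mul_mem' := by
    intro a b ha hb
    simp only [Set.mem_setOf_eq] at *
    rw [map_mul, Module.End.mul_apply, hb, ha]
  inv_mem' := by
    intro g hg
    simp only [Set.mem_setOf_eq] at *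
    conv_lhs => rw [← hg]
    rw [← Module.End.mul_apply, ← map_mul, inv_mul_cancel, map_one, Module.End.one_apply]

lemma mem_repStab {ρ : G →* V →ₗ[k] V} {v : V} {g : G} : g ∈ repStab ρ v ↔ ρ g v = v :=
  Iff.rfl

lemma repStab_isOpen {ρ : G →* V →ₗ[k] V} (hsm : IsSmoothRep ρ) (v : V) :
    IsOpen ((repStab ρ v : Subgroup G) : Set G) := hsm v

lemma rep_mul_apply (ρ : G →* V →ₗ[k] V) (a b : G) (v : V) :
    ρ a (ρ b v) = ρ (a * b) v := by
  rw [map_mul, Module.End.mul_apply]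

/-- Key fixed point lemma: a smooth representation of an open pro-p group over a finite
field of characteristic p with a nonzero vector has a nonzero fixed vector. -/
lemma exists_nonzero_fixed_vector {p : ℕ} (hp : p.Prime) [Fintype k] [CharP k p]
    {S : Type} [AddCommGroup S] [Module k S] (ρS : G →* S →ₗ[k] S)
    (hsm : IsSmoothRep ρS) {P : Subgroup G} (hPp : IsProP p P)
    {s₀ : S} (hs₀ : s₀ ≠ 0) :
    ∃ s : S, s ≠ 0 ∧ ∀ g ∈ P, ρS g s = s := by
  classical
  haveI : Fact p.Prime := ⟨hp⟩
  set O : Set S := Set.range (fun q : P => ρS q s₀) with hO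
  obtain ⟨m₀, hm₀⟩ := hPp _ (repStab_isOpen hsm s₀)
  haveI : ((repStab ρS s₀).subgroupOf P).FiniteIndex := by
    constructor
    show (repStab ρS s₀).relIndex P ≠ 0
    rw [hm₀]
    exact pow_ne_zero _ hp.pos.ne'
  have hOsub : O ⊆ Set.range
      (fun x : P ⧸ ((repStab ρS s₀).subgroupOf P) => ρS (x.out : P) s₀) := by
    rintro _ ⟨q, rfl⟩
    refine ⟨QuotientGroup.mk q, ?_⟩
    have h1 : (QuotientGroup.mk q : P ⧸ ((repStab ρS s₀).subgroupOf P))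
        = QuotientGroup.mk (QuotientGroup.mk q : P ⧸ ((repStab ρS s₀).subgroupOf P)).out :=
      (QuotientGroup.out_eq' _).symm
    have h2 : q⁻¹ * (QuotientGroup.mk q : P ⧸ ((repStab ρS s₀).subgroupOf P)).out
        ∈ (repStab ρS s₀).subgroupOf P := QuotientGroup.eq.mp h1
    have h3 := Subgroup.mem_subgroupOf.mp h2
    have h4 : (QuotientGroup.mk q : P ⧸ ((repStab ρS s₀).subgroupOf P)).out
        = q * (q⁻¹ * (QuotientGroup.mk q : P ⧸ ((repStab ρS s₀).subgroupOf P)).out) := by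
      group
    show ρS _ s₀ = ρS _ s₀
    rw [h4, Subgroup.coe_mul, map_mul, Module.End.mul_apply, mem_repStab.mp h3]
  have hOfin : O.Finite := Set.Finite.subset (Set.finite_range _) hOsub
  set W : Submodule k S := Submodule.span k O with hW
  haveI hWfd : FiniteDimensional k W := FiniteDimensional.span_of_finite k hOfin
  haveI : Finite ↥W := Module.finite_of_finite k
  have hs₀O : s₀ ∈ O := ⟨1, by simp⟩
  have hs₀W : s₀ ∈ W := Submodule.subset_span hs₀O
  have hWstab : ∀ (q : P) (w : S), w ∈ W → ρS ↑q w ∈ W := by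
    intro q w hw
    have hsub : ∀ x ∈ O, ρS ↑q x ∈ W := by
      rintro _ ⟨q', rfl⟩
      refine Submodule.subset_span ⟨q * q', ?_⟩
      show ρS _ s₀ = ρS ↑q (ρS ↑q' s₀)
      rw [Subgroup.coe_mul, map_mul, Module.End.mul_apply]
    have : W.map (ρS ↑q) ≤ W := by
      rw [hW]
      exact (Submodule.map_span_le _ _ _).mpr hsub
    exact this (Submodule.mem_map_of_mem hw)
  -- the permutation action of P on W
  let e : P → Equiv.Perm ↥W := fun q =>
    { toFun := fun w => ⟨ρS ↑q ↑w, hWstab q ↑w w.2⟩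
      invFun := fun w => ⟨ρS ↑(q⁻¹) ↑w, hWstab q⁻¹ ↑w w.2⟩
      left_inv := fun w => Subtype.ext (by
        show ρS ↑(q⁻¹) (ρS ↑q ↑w) = ↑w
        rw [rep_mul_apply, Subgroup.coe_inv, inv_mul_cancel, map_one, Module.End.one_apply])
      right_inv := fun w => Subtype.ext (by
        show ρS ↑q (ρS ↑(q⁻¹) ↑w) = ↑w
        rw [rep_mul_apply, Subgroup.coe_inv, mul_inv_cancel, map_one, Module.End.one_apply]) }
  have e_apply : ∀ (q : P) (w : ↥W), ((e q w : ↥W) : S) = ρS ↑q ↑w := fun _ _ => rfl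
  let φ : P →* Equiv.Perm ↥W :=
    { toFun := e
      map_one' := Equiv.ext fun w => Subtype.ext (by
        show ρS ↑(1 : P) ↑w = ↑w
        rw [OneMemClass.coe_one, map_one, Module.End.one_apply])
      map_mul' := fun a b => Equiv.ext fun w => Subtype.ext (by
        show ρS ↑(a * b) ↑w = ((e a) ((e b) w) : ↥W)
        rw [Subgroup.coe_mul, ← rep_mul_apply]
        rfl) }
  set Q : Subgroup G := ⨅ w : ↥W, repStab ρS ↑w with hQ
  have hQopen : IsOpen (Q : Set G) := by
    rw [hQ, Subgroup.coe_iInf]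
    exact isOpen_iInter_of_finite fun w => hsm ↑w
  obtain ⟨m, hm⟩ := hPp Q hQopen
  have hker : φ.ker = Q.subgroupOf P := by
    ext q
    simp only [MonoidHom.mem_ker, Subgroup.mem_subgroupOf, hQ, Subgroup.mem_iInf]
    constructor
    · intro h w
      have h2 : ((φ q) w : ↥W) = w := by rw [h]; rfl
      exact congrArg Subtype.val h2
    · intro h
      refine Equiv.ext fun w => Subtype.ext ?_
      show ρS ↑q ↑w = ↑w
      exact mem_repStab.mp (h w)
  have hcard : Nat.card φ.range = p ^ m := by
    have h1 := Subgroup.index_ker φ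
    rw [hker] at h1
    rw [← h1]
    exact hm
  have hpg : IsPGroup p φ.range := IsPGroup.of_card hcard
  have hmod := hpg.card_modEq_card_fixedPoints ↥W
  haveI : Fintype ↥W := Fintype.ofFinite _
  haveI : Nontrivial ↥W :=
    ⟨⟨⟨s₀, hs₀W⟩, 0, by simp [Subtype.ext_iff, hs₀]⟩⟩
  have hdvd : p ∣ Nat.card ↥W := by
    obtain ⟨n, _, hcardk⟩ := FiniteField.card k p
    rw [Nat.card_eq_fintype_card, Module.card_eq_pow_finrank (K := k) (V := ↥W), hcardk, ← pow_mul]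
    refine dvd_pow_self p ?_
    have h2 : 0 < Module.finrank k ↥W := Module.finrank_pos
    have h3 : (n : ℕ) ≠ 0 := n.pos.ne'
    exact Nat.mul_ne_zero h3 h2.ne'
  have hdvdfix : p ∣ Nat.card (MulAction.fixedPoints φ.range ↥W) :=
    Nat.modEq_zero_iff_dvd.mp ((hmod.symm.trans (Nat.modEq_zero_iff_dvd.mpr hdvd)))
  have h0fix : (0 : ↥W) ∈ MulAction.fixedPoints φ.range ↥W := by
    intro σ
    obtain ⟨q, hq⟩ := σ.2
    show σ • (0 : ↥W) = 0
    rw [Subgroup.smul_def, Equiv.Perm.smul_def, ← hq]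
    exact Subtype.ext (show ρS ↑q ((0 : ↥W) : S) = ((0 : ↥W) : S) by simp)
  haveI : Nonempty (MulAction.fixedPoints φ.range ↥W) := ⟨⟨0, h0fix⟩⟩
  have hfixpos : 0 < Nat.card (MulAction.fixedPoints φ.range ↥W) := Nat.card_pos
  have hgt : 1 < Nat.card (MulAction.fixedPoints φ.range ↥W) :=
    lt_of_lt_of_le hp.one_lt (Nat.le_of_dvd hfixpos hdvdfix)
  haveI : Nontrivial (MulAction.fixedPoints φ.range ↥W) :=
    Finite.one_lt_card_iff_nontrivial.mp (by simpa [Nat.card_eq_fintype_card] using hgt)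
  obtain ⟨w, hwne⟩ := exists_ne (⟨(0 : ↥W), h0fix⟩ : MulAction.fixedPoints φ.range ↥W)
  refine ⟨((w : ↥W) : S), ?_, ?_⟩
  · intro h
    exact hwne (Subtype.ext (Subtype.ext h))
  · intro g hg
    have hr : φ ⟨g, hg⟩ ∈ φ.range := ⟨⟨g, hg⟩, rfl⟩
    have hfix := w.2 (⟨φ ⟨g, hg⟩, hr⟩ : φ.range)
    rw [Subgroup.smul_def, Equiv.Perm.smul_def] at hfix
    exact congrArg Subtype.val hfix

end Helpers
section Helpers2

variable {k : Type} [Field k] {G : Type} [Group G] [TopologicalSpace G]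
variable {V : Type} [AddCommGroup V] [Module k V]

/-- Restriction of a representation to an invariant subspace. -/
def resRep (ρ : G →* V →ₗ[k] V) (U : Submodule k V)
    (hU : ∀ g v, v ∈ U → ρ g v ∈ U) : G →* (↥U →ₗ[k] ↥U) where
  toFun g := (ρ g).restrict (fun v hv => hU g v hv)
  map_one' := by
    refine LinearMap.ext fun u => Subtype.ext ?_
    simp [LinearMap.restrict_apply]
  map_mul' g h := by
    refine LinearMap.ext fun u => Subtype.ext ?_
    simp [LinearMap.restrict_apply]

lemma resRep_coe {ρ : G →* V →ₗ[k] V} {U : Submodule k V}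
    {hU : ∀ g v, v ∈ U → ρ g v ∈ U} (g : G) (u : ↥U) :
    ((resRep ρ U hU g u : ↥U) : V) = ρ g ↑u := rfl

/-- Quotient representation. -/
def quotRep (ρ : G →* V →ₗ[k] V) (U : Submodule k V)
    (hU : ∀ g v, v ∈ U → ρ g v ∈ U) : G →* ((V ⧸ U) →ₗ[k] (V ⧸ U)) where
  toFun g := Submodule.mapQ U U (ρ g) (fun v hv => hU g v hv)
  map_one' := by
    refine LinearMap.ext fun x => ?_
    obtain ⟨v, rfl⟩ := Submodule.Quotient.mk_surjective U x
    simp [Submodule.mapQ_apply]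
  map_mul' g h := by
    refine LinearMap.ext fun x => ?_
    obtain ⟨v, rfl⟩ := Submodule.Quotient.mk_surjective U x
    simp [Submodule.mapQ_apply]

lemma quotRep_mk {ρ : G →* V →ₗ[k] V} {U : Submodule k V}
    {hU : ∀ g v, v ∈ U → ρ g v ∈ U} (g : G) (v : V) :
    quotRep ρ U hU g (Submodule.Quotient.mk v) = Submodule.Quotient.mk (ρ g v) :=
  by simp [quotRep, Submodule.mapQ_apply]

lemma isSmoothRep_resRep {ρ : G →* V →ₗ[k] V} {U : Submodule k V}
    {hU : ∀ g v, v ∈ U → ρ g v ∈ U} (hsm : IsSmoothRep ρ) :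
    IsSmoothRep (resRep ρ U hU) := by
  intro u
  have h : {g : G | resRep ρ U hU g u = u} = {g : G | ρ g ↑u = ↑u} := by
    ext g
    simp only [Set.mem_setOf_eq, Subtype.ext_iff, resRep_coe]
  rw [h]
  exact hsm ↑u

lemma isSmoothRep_quotRep [ContinuousMul G] {ρ : G →* V →ₗ[k] V} {U : Submodule k V}
    {hU : ∀ g v, v ∈ U → ρ g v ∈ U} (hsm : IsSmoothRep ρ) :
    IsSmoothRep (quotRep ρ U hU) := by
  intro x
  obtain ⟨v, rfl⟩ := Submodule.Quotient.mk_surjective U x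
  have hle : repStab ρ v ≤ repStab (quotRep ρ U hU) (Submodule.Quotient.mk v) := by
    intro g hg
    show quotRep ρ U hU g (Submodule.Quotient.mk v) = Submodule.Quotient.mk v
    rw [quotRep_mk, mem_repStab.mp hg]
  exact Subgroup.isOpen_mono hle (hsm v)

/-- If a linear map has finite dimensional kernel and codomain, the domain is
finite dimensional. -/
lemma fd_of_fd_ker {M N : Type} [AddCommGroup M] [Module k M] [AddCommGroup N]
    [Module k N] (f : M →ₗ[k] N) [FiniteDimensional k N]
    (h : FiniteDimensional k (LinearMap.ker f)) : FiniteDimensional k M := by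
  have h1 : (Submodule.map f ⊤).FG :=
    (Submodule.fg_iff_finiteDimensional _).mpr inferInstance
  have h2 : ((⊤ : Submodule k M) ⊓ LinearMap.ker f).FG := by
    rw [top_inf_eq]
    exact (Submodule.fg_iff_finiteDimensional _).mpr h
  exact ⟨Submodule.fg_of_fg_map_of_fg_inf_ker f h1 h2⟩

lemma equivHom_fd_of_subsingleton {T : Type} [AddCommGroup T] [Module k T]
    [Subsingleton T] (ρT : G →* T →ₗ[k] T) (ρ : G →* V →ₗ[k] V) :
    FiniteDimensional k (equivHom ρT ρ) := by
  haveI : Subsingleton (T →ₗ[k] V) :=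
    ⟨fun f g => LinearMap.ext fun t => by rw [Subsingleton.elim t 0, map_zero, map_zero]⟩
  haveI : Subsingleton ↥(equivHom ρT ρ) := by infer_instance
  exact ⟨⟨∅, Subsingleton.elim _ _⟩⟩

end Helpers2
section Helpers3

variable {k : Type} [Field k] {G : Type} [Group G] [TopologicalSpace G]
variable {V : Type} [AddCommGroup V] [Module k V]

set_option maxHeartbeats 1000000 in
/-- The key induction: if `Hom_G(S, V)` is finite dimensional for every irreducible
smooth `S`, then it is finite dimensional for every finite dimensional smooth `T`. -/
lemma equivHom_fd_of_fd [ContinuousMul G] (ρ : G →* V →ₗ[k] V)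
    (hyp : ∀ (S : Type) (_ : AddCommGroup S) (_ : Module k S) (ρS : G →* S →ₗ[k] S),
        IsSmoothRep ρS → IsIrrRep ρS → FiniteDimensional k (equivHom ρS ρ)) :
    ∀ (n : ℕ) (T : Type) (iA : AddCommGroup T) (iM : Module k T)
      (ρT : G →* T →ₗ[k] T),
      IsSmoothRep ρT → FiniteDimensional k T → Module.finrank k T ≤ n →
      FiniteDimensional k (equivHom ρT ρ) := by
  intro n
  induction n with
  | zero =>
    intro T iA iM ρT _ hfd hrk
    haveI : Subsingleton T := Module.finrank_zero_iff.mp (Nat.le_zero.mp hrk)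
    exact equivHom_fd_of_subsingleton ρT ρ
  | succ n ih =>
    intro T iA iM ρT hsmT hfdT hrk
    rcases subsingleton_or_nontrivial T with hT | hT
    · exact equivHom_fd_of_subsingleton ρT ρ
    classical
    have hex : ∃ d, ∃ U : Submodule k T,
        (∀ g v, v ∈ U → ρT g v ∈ U) ∧ U ≠ ⊥ ∧ Module.finrank k ↥U = d := by
      refine ⟨_, ⊤, fun g v _ => Submodule.mem_top, ?_, rfl⟩
      intro h
      obtain ⟨x, hx⟩ := exists_ne (0 : T)
      exact hx (by simpa [h] using Submodule.mem_top (R := k) (x := x))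
    obtain ⟨U, hUstab, hUbot, hUrank⟩ := Nat.find_spec hex
    haveI : Nontrivial ↥U := Submodule.nontrivial_iff_ne_bot.mpr hUbot
    have hirr : IsIrrRep (resRep ρT U hUstab) := by
      refine ⟨inferInstance, ?_⟩
      intro U' hU'stab
      by_cases hb : U' = ⊥
      · exact Or.inl hb
      refine Or.inr ?_
      set U'' := U'.map U.subtype with hU''
      have hstab'' : ∀ g v, v ∈ U'' → ρT g v ∈ U'' := by
        rintro g _ ⟨u, hu, rfl⟩
        exact ⟨resRep ρT U hUstab g u, hU'stab g u hu, resRep_coe (hU := hUstab) g u⟩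
      have hne'' : U'' ≠ ⊥ := by
        obtain ⟨x, hx, hx0⟩ := (Submodule.ne_bot_iff U').mp hb
        refine (Submodule.ne_bot_iff U'').mpr ⟨↑x, ⟨x, hx, rfl⟩, ?_⟩
        simpa using hx0
      have hd : Nat.find hex ≤ Module.finrank k ↥U'' :=
        Nat.find_min' hex ⟨U'', hstab'', hne'', rfl⟩
      have heq : Module.finrank k ↥U' = Module.finrank k ↥U'' :=
        LinearEquiv.finrank_eq (Submodule.equivMapOfInjective U.subtype
          (Submodule.injective_subtype U) U')
      have hle : Module.finrank k ↥U' ≤ Nat.find hex := by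
        rw [← hUrank]
        exact Submodule.finrank_le U'
      have : Module.finrank k ↥U' = Module.finrank k ↥U := by omega
      exact Submodule.eq_top_of_finrank_eq this
    haveI hfdU1 : FiniteDimensional k (equivHom (resRep ρT U hUstab) ρ) :=
      hyp ↥U _ _ (resRep ρT U hUstab) (isSmoothRep_resRep hsmT) hirr
    have hrkQ : Module.finrank k (T ⧸ U) ≤ n := by
      have h1 := Submodule.finrank_quotient_add_finrank U
      have h2 : 0 < Module.finrank k ↥U := Module.finrank_pos
      omega
    haveI hfdQ1 : FiniteDimensional k (equivHom (quotRep ρT U hUstab) ρ) :=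
      ih (T ⧸ U) _ _ (quotRep ρT U hUstab) (isSmoothRep_quotRep hsmT) inferInstance hrkQ
    let Φ : ↥(equivHom ρT ρ) →ₗ[k] ↥(equivHom (resRep ρT U hUstab) ρ) :=
      { toFun := fun f => ⟨((f : T →ₗ[k] V)).comp U.subtype, by
          intro g u
          show (f : T →ₗ[k] V) ↑(resRep ρT U hUstab g u) = ρ g ((f : T →ₗ[k] V) ↑u)
          rw [resRep_coe]
          exact f.2 g ↑u⟩
        map_add' := fun f g => Subtype.ext (by
          show ((↑(f + g) : T →ₗ[k] V)).comp U.subtype = _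
          simp [LinearMap.add_comp])
        map_smul' := fun c f => Subtype.ext (by
          show ((↑(c • f) : T →ₗ[k] V)).comp U.subtype = _
          simp [LinearMap.smul_comp]) }
    have hkerfd : FiniteDimensional k (LinearMap.ker Φ) := by
      have hvanish : ∀ f : LinearMap.ker Φ,
          U ≤ LinearMap.ker ((f : ↥(equivHom ρT ρ)) : T →ₗ[k] V) := by
        intro f v hv
        have h0 : Φ f.1 = 0 := f.2
        have h1 : ((f.1 : ↥(equivHom ρT ρ)) : T →ₗ[k] V).comp U.subtype = 0 :=
          congrArg Subtype.val h0
        exact LinearMap.congr_fun h1 (⟨v, hv⟩ : ↥U)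
      let Θ : ↥(LinearMap.ker Φ) →ₗ[k] ↥(equivHom (quotRep ρT U hUstab) ρ) :=
        { toFun := fun f => ⟨U.liftQ ((f : ↥(equivHom ρT ρ)) : T →ₗ[k] V) (hvanish f), by
            intro g x
            obtain ⟨v, rfl⟩ := Submodule.Quotient.mk_surjective U x
            rw [quotRep_mk, Submodule.liftQ_apply, Submodule.liftQ_apply]
            exact (f : ↥(equivHom ρT ρ)).2 g v⟩
          map_add' := fun f g => Subtype.ext (by
            refine LinearMap.ext fun x => ?_
            obtain ⟨v, rfl⟩ := Submodule.Quotient.mk_surjective U x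
            simp)
          map_smul' := fun c f => Subtype.ext (by
            refine LinearMap.ext fun x => ?_
            obtain ⟨v, rfl⟩ := Submodule.Quotient.mk_surjective U x
            simp) }
      have hinj : Function.Injective Θ := by
        intro f g h
        refine Subtype.ext (Subtype.ext (LinearMap.ext fun v => ?_))
        exact LinearMap.congr_fun (congrArg Subtype.val h) (Submodule.Quotient.mk v)
      exact FiniteDimensional.of_injective Θ hinj
    exact fd_of_fd_ker Φ hkerfd

end Helpers3
set_option maxHeartbeats 1000000 in
/-- Let `𝒢` be a profinite group with an open pro-p subgroup, `k` a finite
field of characteristic `p`, and `V` a smooth `k`-representation of `𝒢`.  Then `V` is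
admissible if and only if `Hom_𝒢(S, V)` is finite dimensional for every irreducible
smooth `k`-representation `S` of `𝒢`. -/
theorem admissible_iff_finite_hom_from_irreducibles
    (p : ℕ) [Fact p.Prime] (k : Type) [Field k] [Fintype k] [CharP k p]
    (G : Type) [Group G] [TopologicalSpace G] [IsTopologicalGroup G]
    [CompactSpace G] [TotallyDisconnectedSpace G] [T2Space G]
    (hP : ∃ P : Subgroup G, IsOpen (P : Set G) ∧ IsProP p P)
    (V : Type) [AddCommGroup V] [Module k V]
    (ρ : G →* V →ₗ[k] V) (hsm : IsSmoothRep ρ) :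
    IsAdmissibleRep p ρ ↔
      ∀ (S : Type) (_ : AddCommGroup S) (_ : Module k S) (ρS : G →* S →ₗ[k] S),
        IsSmoothRep ρS → IsIrrRep ρS → FiniteDimensional k (equivHom ρS ρ) := by
  constructor
  · -- admissible implies Hom from irreducibles finite dimensional
    intro hadm S iA iM ρS hsmS hirrS
    obtain ⟨P, hPo, hPp⟩ := hP
    haveI := hadm P hPo hPp
    haveI : Nontrivial S := hirrS.1
    obtain ⟨s₀', hs₀'⟩ := exists_ne (0 : S)
    obtain ⟨s₀, hs₀, hfix⟩ := exists_nonzero_fixed_vector (Fact.out : p.Prime) ρS hsmS hPp hs₀'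
    let ev : ↥(equivHom ρS ρ) →ₗ[k] ↥(invariants ρ P) :=
      { toFun := fun f => ⟨(f : S →ₗ[k] V) s₀, by
          intro g hg
          show ρ g ((f : S →ₗ[k] V) s₀) = (f : S →ₗ[k] V) s₀
          rw [← f.2 g s₀, hfix g hg]⟩
        map_add' := fun f g => Subtype.ext rfl
        map_smul' := fun c f => Subtype.ext rfl }
    have hker : ∀ f : ↥(equivHom ρS ρ), (f : S →ₗ[k] V) s₀ = 0 → f = 0 := by
      intro f hf
      have hstabker : ∀ g v, v ∈ LinearMap.ker (f : S →ₗ[k] V) →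
          ρS g v ∈ LinearMap.ker (f : S →ₗ[k] V) := by
        intro g v hv
        rw [LinearMap.mem_ker] at hv ⊢
        rw [f.2 g v, hv, map_zero]
      rcases hirrS.2 _ hstabker with h | h
      · exfalso
        have hmem : s₀ ∈ LinearMap.ker (f : S →ₗ[k] V) := hf
        rw [h] at hmem
        exact hs₀ ((Submodule.mem_bot k).mp hmem)
      · refine Subtype.ext (LinearMap.ext fun s => ?_)
        have hmem : s ∈ LinearMap.ker (f : S →ₗ[k] V) := h ▸ Submodule.mem_top
        simpa using hmem
    refine FiniteDimensional.of_injective ev ?_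
    intro f g hfg
    have h1 : ((f - g : ↥(equivHom ρS ρ)) : S →ₗ[k] V) s₀ = 0 := by
      have h2 : (f : S →ₗ[k] V) s₀ = (g : S →ₗ[k] V) s₀ := congrArg Subtype.val hfg
      show (f : S →ₗ[k] V) s₀ - (g : S →ₗ[k] V) s₀ = 0
      rw [h2, sub_self]
    exact sub_eq_zero.mp (hker _ h1)
  · -- Hom from irreducibles finite dimensional implies admissible
    intro hyp P hPo hPp
    classical
    have hclopen : IsClopen (P : Set G) := ⟨(⟨P, hPo⟩ : OpenSubgroup G).isClosed, hPo⟩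
    obtain ⟨N, hNP⟩ :=
      IsTopologicalGroup.exist_openNormalSubgroup_sub_clopen_nhds_of_one hclopen P.one_mem
    set Ns : Subgroup G := N.toOpenSubgroup.toSubgroup with hNs
    haveI hNnormal : Ns.Normal := N.isNormal'
    have hNopen : IsOpen (Ns : Set G) := N.toOpenSubgroup.isOpen
    haveI : Finite (G ⧸ Ns) := Ns.quotient_finite_of_isOpen hNopen
    haveI : Fintype (G ⧸ Ns) := Fintype.ofFinite _
    -- the regular representation of G/N, inflated to G
    let A : Type := (G ⧸ Ns) → k
    let ρA : G →* (A →ₗ[k] A) :=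
      { toFun := fun g =>
          { toFun := fun f => fun x => f (g⁻¹ • x)
            map_add' := fun u v => rfl
            map_smul' := fun c u => rfl }
        map_one' := LinearMap.ext fun f => funext fun x => by
          show f ((1 : G)⁻¹ • x) = f x
          rw [inv_one, one_smul]
        map_mul' := fun g h => LinearMap.ext fun f => funext fun x => by
          show f ((g * h)⁻¹ • x) = f (h⁻¹ • (g⁻¹ • x))
          rw [mul_inv_rev, mul_smul] }
    have hsmA : IsSmoothRep ρA := by
      intro f
      have hle : Ns ≤ repStab ρA f := by
        intro n hn
        show ρA n f = f
        refine funext fun x => ?_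
        obtain ⟨y, rfl⟩ := QuotientGroup.mk_surjective x
        show f (n⁻¹ • (QuotientGroup.mk y : G ⧸ Ns)) = f (QuotientGroup.mk y)
        have hx : (n⁻¹ • (QuotientGroup.mk y : G ⧸ Ns)) = QuotientGroup.mk y := by
          rw [MulAction.Quotient.smul_mk]
          rw [QuotientGroup.eq]
          have hmem := hNnormal.conj_mem n hn y⁻¹
          simpa [mul_assoc, smul_eq_mul] using hmem
        rw [hx]
      exact Subgroup.isOpen_mono hle hNopen
    haveI : FiniteDimensional k A := by infer_instance
    haveI hAhom : FiniteDimensional k (equivHom ρA ρ) :=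
      equivHom_fd_of_fd ρ hyp (Module.finrank k A) A _ _ ρA hsmA inferInstance le_rfl
    have hrep : ∀ (w : ↥(invariants ρ Ns)) (a b : G),
        (QuotientGroup.mk a : G ⧸ Ns) = QuotientGroup.mk b → ρ a ↑w = ρ b ↑w := by
      intro w a b hab
      have hn : a⁻¹ * b ∈ Ns := QuotientGroup.eq.mp hab
      have hb : b = a * (a⁻¹ * b) := by group
      rw [hb, map_mul, Module.End.mul_apply, w.2 _ hn]
    let F : ↥(invariants ρ Ns) → (A →ₗ[k] V) := fun w =>
      { toFun := fun f => ∑ x : G ⧸ Ns, f x • ρ x.out ↑w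
        map_add' := fun f g => by
          show ∑ x : G ⧸ Ns, (f x + g x) • ρ x.out ↑w = _
          simp [add_smul, Finset.sum_add_distrib]
        map_smul' := fun c f => by
          show ∑ x : G ⧸ Ns, (c * f x) • ρ x.out ↑w = _
          simp [smul_smul, Finset.smul_sum] }
    have hFequiv : ∀ (w : ↥(invariants ρ Ns)) (g : G) (f : A),
        F w (ρA g f) = ρ g (F w f) := by
      intro w g f
      show ∑ x : G ⧸ Ns, f (g⁻¹ • x) • ρ x.out ↑w = ρ g (∑ x : G ⧸ Ns, f x • ρ x.out ↑w)
      rw [map_sum]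
      simp only [map_smul]
      refine Fintype.sum_equiv (MulAction.toPerm g⁻¹ : Equiv.Perm (G ⧸ Ns)) _ _ ?_
      intro x
      have he : (MulAction.toPerm g⁻¹ : Equiv.Perm (G ⧸ Ns)) x = g⁻¹ • x := rfl
      rw [he]
      have h1 : ρ g (ρ ((g⁻¹ • x).out) (↑w : V)) = ρ (g * (g⁻¹ • x).out) ↑w :=
        rep_mul_apply ρ _ _ _
      have h2 : ρ (g * (g⁻¹ • x).out) (↑w : V) = ρ x.out ↑w := by
        refine hrep w _ _ ?_
        calc (QuotientGroup.mk (g * (g⁻¹ • x).out) : G ⧸ Ns)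
            = g • (QuotientGroup.mk ((g⁻¹ • x).out) : G ⧸ Ns) :=
              (MulAction.Quotient.smul_mk Ns g _).symm
          _ = g • (g⁻¹ • x) := by rw [QuotientGroup.out_eq']
          _ = x := smul_inv_smul g x
          _ = QuotientGroup.mk x.out := (QuotientGroup.out_eq' x).symm
      rw [h1, h2]
    let Ψ : ↥(invariants ρ Ns) →ₗ[k] ↥(equivHom ρA ρ) :=
      { toFun := fun w => ⟨F w, fun g f => hFequiv w g f⟩
        map_add' := fun w w' => Subtype.ext (LinearMap.ext fun f => by
          show ∑ x : G ⧸ Ns, f x • ρ x.out ↑(w + w')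
              = (∑ x : G ⧸ Ns, f x • ρ x.out ↑w) + ∑ x : G ⧸ Ns, f x • ρ x.out ↑w'
          rw [← Finset.sum_add_distrib]
          refine Finset.sum_congr rfl fun x _ => ?_
          rw [Submodule.coe_add, map_add, smul_add])
        map_smul' := fun c w => Subtype.ext (LinearMap.ext fun f => by
          show ∑ x : G ⧸ Ns, f x • ρ x.out ↑(c • w)
              = c • ∑ x : G ⧸ Ns, f x • ρ x.out ↑w
          rw [Finset.smul_sum]
          refine Finset.sum_congr rfl fun x _ => ?_
          rw [Submodule.coe_smul, map_smul, smul_comm]) }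
    have hsingle : ∀ w : ↥(invariants ρ Ns),
        (∑ x : G ⧸ Ns, (Pi.single (1 : G ⧸ Ns) (1 : k) : A) x • ρ x.out (↑w : V)) = (↑w : V) := by
      intro w
      rw [Finset.sum_eq_single (1 : G ⧸ Ns)]
      · rw [Pi.single_eq_same, one_smul]
        have h1 : ρ ((1 : G ⧸ Ns).out) (↑w : V) = ρ (1 : G) ↑w := by
          refine hrep w _ _ ?_
          rw [QuotientGroup.out_eq']
          rfl
        rw [h1, map_one, Module.End.one_apply]
      · intro x _ hx
        rw [Pi.single_eq_of_ne hx, zero_smul]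
      · intro hx
        exact absurd (Finset.mem_univ _) hx
    have hinj : Function.Injective Ψ := by
      intro w w' h
      have h1 : F w = F w' := congrArg Subtype.val h
      have h2 : (∑ x : G ⧸ Ns, (Pi.single (1 : G ⧸ Ns) (1 : k) : A) x • ρ x.out (↑w : V))
          = (∑ x : G ⧸ Ns, (Pi.single (1 : G ⧸ Ns) (1 : k) : A) x • ρ x.out (↑w' : V)) :=
        LinearMap.congr_fun h1 (Pi.single (1 : G ⧸ Ns) (1 : k))
      rw [hsingle w, hsingle w'] at h2
      exact Subtype.ext h2
    haveI : FiniteDimensional k ↥(invariants ρ Ns) := FiniteDimensional.of_injective Ψ hinj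
    have hle : invariants ρ P ≤ invariants ρ Ns := by
      intro v hv g hg
      exact hv g (hNP hg)
    exact Submodule.finiteDimensional_of_le hle
end

section
/- Let 𝒫 be a pro-p group and k a finite field of characteristic p. Let C(𝒫, k) denote the space of continuous (i.e. locally constant) functions from 𝒫 to k, with 𝒫 acting by right translation. Then the inclusion of the constant functions, k ↪ C(𝒫, k), is an injective envelope of the trivial representation in the category of smooth k-representations of 𝒫. -/
section Stmt2

variable (k : Type) [Field k] (G : Type) [Group G] [TopologicalSpace G] [IsTopologicalGroup G]

/-- The right translation action of `G` on the space `C(G, k)` of locally constant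
(`= continuous`, for `k` discrete) functions `G → k`. -/
def rightTranslation : G →* (LocallyConstant G k →ₗ[k] LocallyConstant G k) where
  toFun g :=
    { toFun := fun f => ⟨fun x => f (x * g),
        f.isLocallyConstant.comp_continuous (continuous_mul_right g)⟩
      map_add' := fun f₁ f₂ => by ext x; rfl
      map_smul' := fun c f => by ext x; rfl }
  map_one' := by ext f x; simp
  map_mul' := fun g h => by ext f x; simp [mul_assoc]

end Stmt2

-- AUX
section MyAux

variable {k : Type} [Field k] {G : Type} [Group G] [TopologicalSpace G] [IsTopologicalGroup G]

lemma rt_apply (g : G) (f : LocallyConstant G k) (x : G) :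
    rightTranslation k G g f x = f (x * g) := rfl

lemma rho_mul_apply {V : Type} [AddCommGroup V] [Module k V] (ρ : G →* V →ₗ[k] V)
    (a b : G) (v : V) : ρ (a * b) v = ρ a (ρ b v) := by
  rw [map_mul]; rfl

/-- the stabilizer of a vector, as a subgroup -/
def stabSubgroup {V : Type} [AddCommGroup V] [Module k V] (ρ : G →* V →ₗ[k] V) (v : V) :
    Subgroup G where
  carrier := {g | ρ g v = v}
  one_mem' := by simp
  mul_mem' := fun {a b} ha hb => by
    have : ρ (a * b) v = ρ a (ρ b v) := rho_mul_apply ρ a b v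
    simp only [Set.mem_setOf_eq] at *
    rw [this, hb, ha]
  inv_mem' := fun {a} ha => by
    simp only [Set.mem_setOf_eq] at *
    conv_lhs => rw [← ha]
    rw [← rho_mul_apply, inv_mul_cancel, map_one]; rfl

lemma smooth_rightTranslation [CompactSpace G] :
    IsSmoothRep (rightTranslation (G := G) k) := by
  intro f
  rw [isOpen_iff_forall_mem_open]
  intro g₀ hg₀
  have hg₀' : ∀ x : G, f (x * g₀) = f x := fun x => by
    have := congrArg (fun F : LocallyConstant G k => F x) hg₀
    simpa [rt_apply] using this
  set D : Set (G × G) := {q | f (q.1 * q.2) = f q.1} with hD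
  have hDopen : IsOpen D := by
    have h1 : IsLocallyConstant (fun q : G × G => (f (q.1 * q.2), f q.1)) := by
      apply IsLocallyConstant.prodMk
      · exact f.isLocallyConstant.comp_continuous continuous_mul
      · exact f.isLocallyConstant.comp_continuous continuous_fst
    exact h1 {p : k × k | p.1 = p.2}
  have hsub : (Set.univ : Set G) ×ˢ ({g₀} : Set G) ⊆ D := by
    rintro ⟨x, g⟩ ⟨-, hg⟩
    rcases hg with rfl
    exact hg₀' x
  obtain ⟨u, v, hu, hv, hGu, hg₀v, huv⟩ :=
    generalized_tube_lemma isCompact_univ isCompact_singleton hDopen hsub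
  refine ⟨v, ?_, hv, hg₀v rfl⟩
  intro g hg
  show rightTranslation k G g f = f
  ext x
  exact huv (Set.mk_mem_prod (hGu (Set.mem_univ x)) hg)

end MyAux

section Essential

variable {k : Type} [Field k] {G : Type} [Group G] [TopologicalSpace G] [IsTopologicalGroup G]

set_option maxHeartbeats 800000 in
lemma essential_const (p : ℕ) [Fact p.Prime] [Fintype k] [CharP k p]
    [CompactSpace G]
    (hproP : IsProP p (⊤ : Subgroup G))
    (U : Submodule k (LocallyConstant G k))
    (hUinv : ∀ (g : G) (f : LocallyConstant G k), f ∈ U → rightTranslation k G g f ∈ U)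
    (hne : U ≠ ⊥) : ∃ c : k, c ≠ 0 ∧ LocallyConstant.const G c ∈ U := by
  classical
  set ρ := rightTranslation k G with hρ
  have hsm : IsSmoothRep ρ := smooth_rightTranslation
  obtain ⟨f, hfU, hf0⟩ := Submodule.exists_mem_ne_zero_of_ne_bot hne
  -- the orbit of f is finite
  set St : Subgroup G := stabSubgroup ρ f with hSt
  have hStopen : IsOpen (St : Set G) := hsm f
  obtain ⟨m, hm⟩ := hproP St hStopen
  rw [Subgroup.relIndex_top_right] at hm
  have hStfin : Finite (G ⧸ St) := by
    have : Nat.card (G ⧸ St) ≠ 0 := by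
      rw [← Subgroup.index, hm]; exact pow_ne_zero m (Fact.out : p.Prime).pos.ne'
    exact Nat.finite_of_card_ne_zero this
  -- well-defined map on the quotient
  have hwd : ∀ a b : G, (QuotientGroup.leftRel St) a b → ρ a f = ρ b f := by
    intro a b hab
    rw [QuotientGroup.leftRel_apply] at hab
    have : ρ (a⁻¹ * b) f = f := hab
    symm
    calc ρ b f = ρ (a * (a⁻¹ * b)) f := by rw [mul_inv_cancel_left]
      _ = ρ a (ρ (a⁻¹ * b) f) := rho_mul_apply ρ _ _ _
      _ = ρ a f := by rw [this]
  set lifted : G ⧸ St → LocallyConstant G k :=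
    fun q => Quotient.liftOn' q (fun g => ρ g f) (fun a b h => hwd a b h) with hlifted
  set S : Set (LocallyConstant G k) := Set.range (fun g : G => ρ g f) with hS
  have hSfin : S.Finite := by
    have : S ⊆ Set.range lifted := by
      rintro x ⟨g, rfl⟩
      exact ⟨QuotientGroup.mk g, rfl⟩
    exact (Set.finite_range lifted).subset this
  set W : Submodule k (LocallyConstant G k) := Submodule.span k S with hW
  have hfW : f ∈ W := Submodule.subset_span ⟨1, by simp [hρ]⟩
  have hWU : W ≤ U := by
    rw [hW, Submodule.span_le]
    rintro x ⟨g, rfl⟩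
    exact hUinv g f hfU
  have hSinv : ∀ (g : G), ∀ s ∈ S, ρ g s ∈ S := by
    rintro g s ⟨a, rfl⟩
    refine ⟨g * a, ?_⟩
    show ρ (g * a) f = ρ g (ρ a f)
    exact rho_mul_apply ρ g a f
  have hWinv : ∀ (g : G), ∀ w ∈ W, ρ g w ∈ W := by
    intro g w hw
    induction hw using Submodule.span_induction with
    | mem x hx => exact Submodule.subset_span (hSinv g x hx)
    | zero => simp
    | add x y _ _ hx hy => rw [map_add]; exact W.add_mem hx hy
    | smul c x _ hx => rw [map_smul]; exact W.smul_mem c hx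
  have hWfd : FiniteDimensional k W := FiniteDimensional.span_of_finite k hSfin
  have hWfin : Finite W := Module.finite_of_finite k
  -- the pointwise fixer of W
  set N : Subgroup G := {
    carrier := {g | ∀ w ∈ W, ρ g w = w}
    one_mem' := fun w _ => by simp [hρ]
    mul_mem' := fun {a b} ha hb w hw => by
      rw [rho_mul_apply, hb w hw, ha w hw]
    inv_mem' := fun {a} ha w hw => by
      conv_lhs => rw [← ha w hw]
      rw [← rho_mul_apply, inv_mul_cancel, map_one]; rfl } with hN
  have hNmem : ∀ g : G, g ∈ N ↔ ∀ w ∈ W, ρ g w = w := fun g => Iff.rfl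
  have hNnormal : N.Normal := by
    constructor
    intro n hn g w hw
    have h1 : ρ g⁻¹ w ∈ W := hWinv g⁻¹ w hw
    calc ρ (g * n * g⁻¹) w = ρ g (ρ n (ρ g⁻¹ w)) := by
          rw [rho_mul_apply, rho_mul_apply]
      _ = ρ g (ρ g⁻¹ w) := by rw [hn _ h1]
      _ = w := by rw [← rho_mul_apply, mul_inv_cancel, map_one]; rfl
  have hNopen : IsOpen (N : Set G) := by
    have heq : (N : Set G) = ⋂ s ∈ S, {g : G | ρ g s = s} := by
      ext g
      simp only [Set.mem_iInter, Set.mem_setOf_eq]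
      constructor
      · intro hg s hs; exact hg s (Submodule.subset_span hs)
      · intro hg w hw
        induction hw using Submodule.span_induction with
        | mem x hx => exact hg x hx
        | zero => simp
        | add x y _ _ hx hy => rw [map_add, hx, hy]
        | smul c x _ hx => rw [map_smul, hx]
    rw [heq]
    exact hSfin.isOpen_biInter (fun s _ => hsm s)
  obtain ⟨m', hm'⟩ := hproP N hNopen
  rw [Subgroup.relIndex_top_right] at hm'
  -- the quotient is a finite p-group acting on W
  have hQcard : Nat.card (G ⧸ N) = p ^ m' := by
    rw [← hm']; rfl
  have hQp : IsPGroup p (G ⧸ N) := IsPGroup.of_card hQcard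
  -- permutation action of G on W
  set φ : G →* Equiv.Perm W := {
    toFun := fun g => {
      toFun := fun w => ⟨ρ g w, hWinv g w w.2⟩
      invFun := fun w => ⟨ρ g⁻¹ w, hWinv g⁻¹ w w.2⟩
      left_inv := fun w => Subtype.ext (by
        show ρ g⁻¹ (ρ g w) = w
        rw [← rho_mul_apply, inv_mul_cancel, map_one]; rfl)
      right_inv := fun w => Subtype.ext (by
        show ρ g (ρ g⁻¹ w) = w
        rw [← rho_mul_apply, mul_inv_cancel, map_one]; rfl) }
    map_one' := Equiv.ext fun w => Subtype.ext (by show ρ 1 w = w; rw [map_one]; rfl)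
    map_mul' := fun a b => Equiv.ext fun w => Subtype.ext (by
      show ρ (a * b) w = ρ a (ρ b w)
      exact rho_mul_apply ρ a b w) } with hφ
  have hNker : N ≤ φ.ker := by
    intro g hg
    rw [MonoidHom.mem_ker]
    exact Equiv.ext fun w => Subtype.ext (hg w w.2)
  set φbar : G ⧸ N →* Equiv.Perm W := QuotientGroup.lift N φ hNker with hφbar
  letI : MulAction (G ⧸ N) W := MulAction.compHom W φbar
  have hsmul : ∀ (g : G) (w : W), ((g : G ⧸ N) • w : W) = ⟨ρ g w, hWinv g w w.2⟩ := by
    intro g w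
    rw [MulAction.compHom_smul_def]
    rfl
  have hmod := hQp.card_modEq_card_fixedPoints W
  -- p divides the cardinality of W
  have hWnontriv : Nontrivial W := by
    refine ⟨⟨f, hfW⟩, 0, ?_⟩
    simp only [ne_eq, Submodule.mk_eq_zero]
    exact hf0
  have hpcardk : p ∣ Fintype.card k := by
    obtain ⟨n, hp, hcard⟩ := FiniteField.card k p
    rw [hcard]
    exact dvd_pow_self p n.ne_zero
  have hpcardW : p ∣ Nat.card W := by
    haveI : Fintype W := Fintype.ofFinite W
    rw [Nat.card_eq_fintype_card, Module.card_eq_pow_finrank (K := k) (V := W)]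
    exact hpcardk.trans (dvd_pow_self _ (Module.finrank_pos (R := k) (M := W)).ne')
  have hpfix : p ∣ Nat.card (MulAction.fixedPoints (G ⧸ N) W) := by
    have := (Nat.modEq_zero_iff_dvd).2 hpcardW
    exact (Nat.modEq_zero_iff_dvd).1 (hmod.symm.trans this)
  -- the fixed points contain 0 and hence a nonzero element
  have h0fix : (0 : W) ∈ MulAction.fixedPoints (G ⧸ N) W := by
    intro q
    induction q using QuotientGroup.induction_on with
    | _ g => exact Subtype.ext (by rw [hsmul]; exact map_zero (ρ g))
  have hfixfin : Finite (MulAction.fixedPoints (G ⧸ N) W) := Subtype.finite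
  have hfixpos : 0 < Nat.card (MulAction.fixedPoints (G ⧸ N) W) :=
    Nat.card_pos_iff.2 ⟨⟨⟨0, h0fix⟩⟩, hfixfin⟩
  have hfixbig : 1 < Nat.card (MulAction.fixedPoints (G ⧸ N) W) := by
    have hp2 : 2 ≤ p := (Fact.out : p.Prime).two_le
    have := Nat.le_of_dvd hfixpos hpfix
    omega
  haveI := Fintype.ofFinite (MulAction.fixedPoints (G ⧸ N) W)
  rw [Nat.card_eq_fintype_card, Fintype.one_lt_card_iff_nontrivial] at hfixbig
  obtain ⟨w, hwne⟩ := exists_ne (⟨⟨0, W.zero_mem⟩, h0fix⟩ :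
    MulAction.fixedPoints (G ⧸ N) W)
  -- w is a nonzero G-invariant element of W
  have hwfix : ∀ g : G, ρ g (w : W) = (w : W) := by
    intro g
    have := w.2 (g : G ⧸ N)
    rw [hsmul] at this
    exact congrArg Subtype.val this
  have hw0 : ((w : W) : LocallyConstant G k) ≠ 0 := by
    intro h
    apply hwne
    apply Subtype.ext
    apply Subtype.ext
    exact h
  -- an invariant locally constant function is constant
  set c : k := ((w : W) : LocallyConstant G k) 1 with hc
  have hwconst : ((w : W) : LocallyConstant G k) = LocallyConstant.const G c := by
    ext x
    have := congrArg (fun F : LocallyConstant G k => F 1) (hwfix x)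
    beta_reduce at this
    rw [rt_apply, one_mul] at this
    show _ = c
    rw [hc]
    exact this
  refine ⟨c, ?_, ?_⟩
  · intro h
    apply hw0
    rw [hwconst, h]
    rfl
  · rw [← hwconst]
    exact hWU (w : W).2

end Essential

section Inj

variable {k : Type} [Field k] {G : Type} [Group G] [TopologicalSpace G] [IsTopologicalGroup G]

lemma lc_injective_rel (U W : Type) [AddCommGroup U] [Module k U] [AddCommGroup W] [Module k W]
    (ρU : G →* U →ₗ[k] U) (ρW : G →* W →ₗ[k] W)
    (hsU : IsSmoothRep ρU) (hsW : IsSmoothRep ρW)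
    (ι : U →ₗ[k] W) (hι : Function.Injective ι) (hιeq : ∀ g u, ι (ρU g u) = ρW g (ι u))
    (f : U →ₗ[k] LocallyConstant G k)
    (hf : ∀ g u, f (ρU g u) = rightTranslation k G g (f u)) :
    ∃ h : W →ₗ[k] LocallyConstant G k,
      (∀ g w, h (ρW g w) = rightTranslation k G g (h w)) ∧ ∀ u, h (ι u) = f u := by
  obtain ⟨π, hπ⟩ := ι.exists_leftInverse_of_injective (LinearMap.ker_eq_bot.2 hι)
  have hπι : ∀ u : U, π (ι u) = u := fun u => by
    have := LinearMap.congr_fun hπ u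
    simpa using this
  set μ : W →ₗ[k] k := {
    toFun := fun w => f (π w) 1
    map_add' := fun a b => by simp
    map_smul' := fun c a => by simp } with hμ
  have hlc : ∀ w : W, IsLocallyConstant (fun x : G => μ (ρW x w)) := by
    intro w
    rw [IsLocallyConstant.iff_exists_open]
    intro x₀
    refine ⟨(fun y => x₀⁻¹ * y) ⁻¹' {g : G | ρW g w = w}, (hsW w).preimage (continuous_mul_left x₀⁻¹), ?_, ?_⟩
    · show ρW (x₀⁻¹ * x₀) w = w
      rw [inv_mul_cancel, map_one]; rfl
    · intro y hy
      have hy' : ρW (x₀⁻¹ * y) w = w := hy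
      have : ρW y w = ρW x₀ w := by
        calc ρW y w = ρW (x₀ * (x₀⁻¹ * y)) w := by rw [mul_inv_cancel_left]
          _ = ρW x₀ (ρW (x₀⁻¹ * y) w) := rho_mul_apply ρW _ _ _
          _ = ρW x₀ w := by rw [hy']
      simp only [this]
  set h : W →ₗ[k] LocallyConstant G k := {
    toFun := fun w => ⟨fun x => μ (ρW x w), hlc w⟩
    map_add' := fun a b => by ext x; simp
    map_smul' := fun c a => by ext x; simp } with hh
  refine ⟨h, ?_, ?_⟩
  · intro g w
    ext x
    show μ (ρW x (ρW g w)) = μ (ρW (x * g) w)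
    rw [← rho_mul_apply]
  · intro u
    ext x
    show μ (ρW x (ι u)) = f u x
    rw [← hιeq]
    show f (π (ι (ρU x u))) 1 = f u x
    rw [hπι, hf]
    show f u (1 * x) = f u x
    rw [one_mul]

end Inj

/-- Let `𝒫` be a pro-p group and `k` a finite field of characteristic `p`.
Then the inclusion of the constant functions `k ↪ C(𝒫, k)` is an injective envelope of
the trivial representation in the category of smooth `k`-representations of `𝒫`:
the inclusion is an injective equivariant map of smooth representations, it is
essential (every nonzero invariant subspace contains a nonzero constant function),
and `C(𝒫, k)` is an injective object relative to smooth representations. -/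
theorem locallyConstant_injective_envelope_of_trivial
    (p : ℕ) [Fact p.Prime] (k : Type) [Field k] [Fintype k] [CharP k p]
    (G : Type) [Group G] [TopologicalSpace G] [IsTopologicalGroup G]
    [CompactSpace G] [TotallyDisconnectedSpace G] [T2Space G]
    (hproP : IsProP p (⊤ : Subgroup G)) :
    -- `C(𝒫, k)` is a smooth representation
    IsSmoothRep (rightTranslation k G) ∧
    -- the inclusion of constants is injective and equivariant
    Function.Injective (fun c : k => LocallyConstant.const G c) ∧
    (∀ (g : G) (c : k), rightTranslation k G g (LocallyConstant.const G c) =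
      LocallyConstant.const G c) ∧
    -- essential: every nonzero invariant subspace meets the constants nontrivially
    (∀ U : Submodule k (LocallyConstant G k),
      (∀ (g : G) (f : LocallyConstant G k), f ∈ U → rightTranslation k G g f ∈ U) →
      U ≠ ⊥ → ∃ c : k, c ≠ 0 ∧ LocallyConstant.const G c ∈ U) ∧
    -- injectivity relative to smooth representations
    (∀ (U W : Type) (_ : AddCommGroup U) (_ : Module k U) (_ : AddCommGroup W)
        (_ : Module k W) (ρU : G →* U →ₗ[k] U) (ρW : G →* W →ₗ[k] W),
      IsSmoothRep ρU → IsSmoothRep ρW →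
      ∀ ι : U →ₗ[k] W, Function.Injective ι → (∀ g u, ι (ρU g u) = ρW g (ι u)) →
      ∀ f : U →ₗ[k] LocallyConstant G k,
        (∀ g u, f (ρU g u) = rightTranslation k G g (f u)) →
        ∃ h : W →ₗ[k] LocallyConstant G k,
          (∀ g w, h (ρW g w) = rightTranslation k G g (h w)) ∧ ∀ u, h (ι u) = f u) := by
  refine ⟨smooth_rightTranslation, ?_, ?_, ?_, ?_⟩
  · intro a b hab
    have := congrArg (fun F : LocallyConstant G k => F 1) hab
    simpa using this
  · intro g c
    ext x
    rfl
  · intro U hU hne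
    exact essential_const p hproP U hU hne
  · intro U W _ _ _ _ ρU ρW hsU hsW ι hι hιeq f hf
    exact lc_injective_rel U W ρU ρW hsU hsW ι hι hιeq f hf
end

section
/- Let 𝒢 be a profinite group with an open pro-p subgroup, k a finite field. Suppose every irreducible smooth k-representation of 𝒢 is absolutely irreducible. Let S be an irreducible smooth k-representation of 𝒢 and I_S an injective envelope of S in the category of smooth k-representations of 𝒢 over k. Then for any field extension k' of k, the representation I_S ⊗_k k' is an injective envelope of S ⊗_k k' in the category of smooth k'-representations of 𝒢. -/
section MoreDefs

variable {k : Type} [Field k] {G : Type} [Group G] [TopologicalSpace G]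

/-- A representation `J` is an injective object relative to the smooth representations:
any equivariant map into `J` extends along any equivariant embedding of smooth
representations. -/
def IsInjObjRel {J : Type} [AddCommGroup J] [Module k J] (ρJ : G →* J →ₗ[k] J) : Prop :=
  ∀ (U W : Type) (_ : AddCommGroup U) (_ : Module k U) (_ : AddCommGroup W)
      (_ : Module k W) (ρU : G →* U →ₗ[k] U) (ρW : G →* W →ₗ[k] W),
    IsSmoothRep ρU → IsSmoothRep ρW →
    ∀ ι : U →ₗ[k] W, Function.Injective ι → (∀ g u, ι (ρU g u) = ρW g (ι u)) →
    ∀ f : U →ₗ[k] J, (∀ g u, f (ρU g u) = ρJ g (f u)) →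
    ∃ h : W →ₗ[k] J, (∀ g w, h (ρW g w) = ρJ g (h w)) ∧ ∀ u, h (ι u) = f u

/-- `ι : V → I` is an essential equivariant embedding. -/
def IsEssentialEmb {V I : Type} [AddCommGroup V] [Module k V] [AddCommGroup I]
    [Module k I] (ρV : G →* V →ₗ[k] V) (ρI : G →* I →ₗ[k] I) (ι : V →ₗ[k] I) : Prop :=
  Function.Injective ι ∧ (∀ g v, ι (ρV g v) = ρI g (ι v)) ∧
    ∀ U : Submodule k I, (∀ g x, x ∈ U → ρI g x ∈ U) → U ≠ ⊥ →
      ∃ x ∈ U, x ≠ 0 ∧ x ∈ LinearMap.range ι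

/-- `ι : V → I` is an injective envelope of `V` in the category of smooth
representations. -/
def IsInjEnvelopeRep {V I : Type} [AddCommGroup V] [Module k V] [AddCommGroup I]
    [Module k I] (ρV : G →* V →ₗ[k] V) (ρI : G →* I →ₗ[k] I) (ι : V →ₗ[k] I) : Prop :=
  IsInjObjRel ρI ∧ IsEssentialEmb ρV ρI ι

end MoreDefs

/-- A bundled smooth representation. -/
structure SmoothRepB (k : Type) [Field k] (G : Type) [Group G] [TopologicalSpace G] where
  V : Type
  [acg : AddCommGroup V]
  [mod : Module k V]
  ρ : G →* V →ₗ[k] V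
  smooth : IsSmoothRep ρ

attribute [instance] SmoothRepB.acg SmoothRepB.mod

/-- Isomorphism of representations. -/
def RepIsoB {k : Type} [Field k] {G : Type} [Group G] [TopologicalSpace G]
    (A B : SmoothRepB k G) : Prop :=
  ∃ e : A.V ≃ₗ[k] B.V, ∀ g v, e (A.ρ g v) = B.ρ g (e v)

open scoped TensorProduct

/-- The base change of a representation along a field extension `k ⊆ k'`. -/
noncomputable def bcRep {k : Type} [Field k] {G : Type} [Group G]
    (k' : Type) [Field k'] [Algebra k k'] {V : Type} [AddCommGroup V] [Module k V]
    (ρ : G →* V →ₗ[k] V) : G →* (k' ⊗[k] V) →ₗ[k'] (k' ⊗[k] V) where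
  toFun g := (ρ g).baseChange k'
  map_one' := by
    simp only [map_one, Module.End.one_eq_id]
    exact LinearMap.baseChange_id ..
  map_mul' := fun g h => by
    simp only [map_mul, Module.End.mul_eq_comp]
    exact LinearMap.baseChange_comp ..

section AuxBC

open scoped TensorProduct

set_option linter.unusedSectionVars false

namespace BC

variable {k : Type} [Field k] {k' : Type} [Field k'] [Algebra k k']
variable {G : Type} [Group G] [TopologicalSpace G]

/-- A stabilizer-like set is open as soon as it is a "subgroup-translate" situation:
if the fixing set contains an open neighbourhood of `1`, the whole set is open. -/
theorem stab_open [IsTopologicalGroup G] {K V : Type} [Semiring K] [AddCommMonoid V] [Module K V]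
    (ρ : G →* V →ₗ[K] V) (v : V) (N : Set G) (hN : IsOpen N) (h1 : (1 : G) ∈ N)
    (hfix : ∀ h ∈ N, ρ h v = v) : IsOpen {g : G | ρ g v = v} := by
  rw [isOpen_iff_forall_mem_open]
  intro g hg
  refine ⟨(g * ·) '' N, ?_, (Homeomorph.mulLeft g).isOpenMap N hN, ⟨1, h1, mul_one g⟩⟩
  rintro _ ⟨h, hh, rfl⟩
  show ρ (g * h) v = v
  rw [map_mul, Module.End.mul_apply, hfix h hh]
  exact hg

theorem finite_orbit [IsTopologicalGroup G] [CompactSpace G] {K V : Type} [Field K]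
    [AddCommGroup V] [Module K V] (ρ : G →* V →ₗ[K] V) (hsm : IsSmoothRep ρ) (v : V) :
    ∃ s : Finset G, ∀ g : G, ∃ g' ∈ s, ρ g v = ρ g' v := by
  have h1 : (1 : G) ∈ {g : G | ρ g v = v} := by simp
  have hcover : (Set.univ : Set G) ⊆ ⋃ x : G, (x * ·) '' {g : G | ρ g v = v} := by
    intro x _
    exact Set.mem_iUnion.2 ⟨x, 1, h1, mul_one x⟩
  obtain ⟨t, ht⟩ := isCompact_univ.elim_finite_subcover _
    (fun x => (Homeomorph.mulLeft x).isOpenMap _ (hsm v)) hcover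
  refine ⟨t, fun g => ?_⟩
  obtain ⟨x, hx, hmem⟩ := Set.mem_iUnion₂.1 (ht (Set.mem_univ g))
  obtain ⟨h, hh, rfl⟩ := hmem
  refine ⟨x, hx, ?_⟩
  show ρ (x * h) v = ρ x v
  rw [map_mul, Module.End.mul_apply, hh]

theorem bcRep_apply {V : Type} [AddCommGroup V] [Module k V] (ρ : G →* V →ₗ[k] V) (g : G) :
    bcRep k' ρ g = (ρ g).baseChange k' := rfl

theorem smooth_bcRep [IsTopologicalGroup G] {V : Type} [AddCommGroup V] [Module k V]
    {ρ : G →* V →ₗ[k] V} (hsm : IsSmoothRep ρ) : IsSmoothRep (bcRep k' ρ) := by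
  intro v
  obtain ⟨s, hs⟩ := TensorProduct.exists_finset v
  apply stab_open (bcRep k' ρ) v (⋂ p ∈ s, {h : G | ρ h p.2 = p.2})
  · exact isOpen_biInter_finset fun p _ => hsm p.2
  · simp
  · intro h hh
    rw [hs, bcRep_apply, map_sum]
    refine Finset.sum_congr rfl fun p hp => ?_
    rw [LinearMap.baseChange_tmul, Set.mem_iInter₂.1 hh p hp]

/-- Contraction of the left tensor factor along a functional `l : k' →ₗ[k] k`. -/
noncomputable def ctr {V : Type} [AddCommGroup V] [Module k V] (l : k' →ₗ[k] k) :
    (k' ⊗[k] V) →ₗ[k] V :=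
  (TensorProduct.lid k V).toLinearMap ∘ₗ (l.rTensor V)

@[simp] theorem ctr_tmul {V : Type} [AddCommGroup V] [Module k V] (l : k' →ₗ[k] k)
    (c : k') (x : V) : ctr l (c ⊗ₜ x) = l c • x := by
  simp [ctr]

theorem ctr_zero {V : Type} [AddCommGroup V] [Module k V] (x : k' ⊗[k] V)
    (h : ∀ l : k' →ₗ[k] k, ctr l x = 0) : x = 0 := by
  classical
  set B := Module.Basis.ofVectorSpace k k' with hB
  let e : (k' ⊗[k] V) ≃ₗ[k] (Module.Basis.ofVectorSpaceIndex k k' →₀ V) :=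
    (TensorProduct.congr B.repr (LinearEquiv.refl k V)).trans
      (TensorProduct.finsuppScalarLeft k V _)
  have key : ∀ (y : k' ⊗[k] V) (b), e y b = ctr (B.coord b) y := by
    intro y
    induction y using TensorProduct.induction_on with
    | zero => intro b; simp
    | tmul c v =>
      intro b
      simp only [e, LinearEquiv.trans_apply, TensorProduct.congr_tmul, LinearEquiv.refl_apply,
        TensorProduct.finsuppScalarLeft_apply_tmul_apply, ctr_tmul, Module.Basis.coord_apply]
    | add y z hy hz =>
      intro b
      simp only [map_add, Finsupp.add_apply, hy b, hz b]
  have he : e x = 0 := Finsupp.ext fun b => by rw [key, h]; simp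
  have := congrArg e.symm he
  simpa using this

theorem ctr_lTensor {V W : Type} [AddCommGroup V] [Module k V] [AddCommGroup W] [Module k W]
    (f : V →ₗ[k] W) (l : k' →ₗ[k] k) (x : k' ⊗[k] V) :
    ctr l (f.lTensor k' x) = f (ctr l x) := by
  induction x using TensorProduct.induction_on with
  | zero => simp
  | tmul c v => simp
  | add y z hy hz => simp [map_add, hy, hz]

theorem ctr_bc {V : Type} [AddCommGroup V] [Module k V] (ρ : G →* V →ₗ[k] V)
    (l : k' →ₗ[k] k) (g : G) (x : k' ⊗[k] V) :
    ctr l (bcRep k' ρ g x) = ρ g (ctr l x) := by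
  rw [bcRep_apply]
  induction x using TensorProduct.induction_on with
  | zero => simp
  | tmul c v => simp
  | add y z hy hz => simp [map_add, hy, hz]

theorem exists_minimal {K V : Type} [Field K] [AddCommGroup V] [Module K V]
    (f : G → V → V) :
    ∀ (n : ℕ) (N : Submodule K V), FiniteDimensional K N → Module.finrank K N = n →
      N ≠ ⊥ → (∀ g x, x ∈ N → f g x ∈ N) →
      ∃ T : Submodule K V, T ≤ N ∧ T ≠ ⊥ ∧ (∀ g x, x ∈ T → f g x ∈ T) ∧
        ∀ T' : Submodule K V, T' ≤ T → (∀ g x, x ∈ T' → f g x ∈ T') → T' ≠ ⊥ → T' = T := by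
  intro n
  induction n using Nat.strong_induction_on with
  | _ n IH =>
    intro N hfd hrank hne hinv
    by_cases hmin : ∀ T' : Submodule K V, T' ≤ N → (∀ g x, x ∈ T' → f g x ∈ T') → T' ≠ ⊥ → T' = N
    · exact ⟨N, le_refl N, hne, hinv, hmin⟩
    · push_neg at hmin
      obtain ⟨T', hle, hinv', hne', hneq⟩ := hmin
      have hlt : T' < N := lt_of_le_of_ne hle hneq
      have hfd' : FiniteDimensional K T' := Submodule.finiteDimensional_of_le hle
      have hr : Module.finrank K T' < n := hrank ▸ Submodule.finrank_lt_finrank_of_lt hlt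
      obtain ⟨T, h1, h2, h3, h4⟩ := IH _ hr T' hfd' rfl hne' hinv'
      exact ⟨T, le_trans h1 hle, h2, h3, h4⟩

end BC

end AuxBC

namespace BC

variable {k : Type} [Field k] {k' : Type} [Field k'] [Algebra k k']
variable {G : Type} [Group G] [TopologicalSpace G]

/-- Restriction of scalars of a representation, as a monoid hom. -/
def resMon {K K' V : Type} [Field K] [Field K'] [Algebra K K'] [AddCommGroup V]
    [Module K V] [Module K' V] [IsScalarTower K K' V] (ρ : G →* V →ₗ[K'] V) :
    G →* V →ₗ[K] V where
  toFun g := (ρ g).restrictScalars K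
  map_one' := by ext x; simp
  map_mul' g h := by ext x; simp

@[simp] theorem resMon_apply {K K' V : Type} [Field K] [Field K'] [Algebra K K']
    [AddCommGroup V] [Module K V] [Module K' V] [IsScalarTower K K' V]
    (ρ : G →* V →ₗ[K'] V) (g : G) (x : V) : resMon (K := K) ρ g x = ρ g x := rfl

theorem smooth_resMon {K K' V : Type} [Field K] [Field K'] [Algebra K K'] [AddCommGroup V]
    [Module K V] [Module K' V] [IsScalarTower K K' V] {ρ : G →* V →ₗ[K'] V}
    (hsm : IsSmoothRep ρ) : IsSmoothRep (resMon (K := K) ρ) := fun v => hsm v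

/-- The span of the orbit of a vector of a smooth representation of a compact group
is a finite-dimensional invariant subspace containing the vector, and it is contained
in every invariant subspace containing the vector. -/
theorem span_orbit [IsTopologicalGroup G] [CompactSpace G] {K V : Type} [Field K]
    [AddCommGroup V] [Module K V] (ρ : G →* V →ₗ[K] V) (hsm : IsSmoothRep ρ) (v : V) :
    ∃ N : Submodule K V, v ∈ N ∧ FiniteDimensional K N ∧
      (∀ g x, x ∈ N → ρ g x ∈ N) ∧
      ∀ U : Submodule K V, v ∈ U → (∀ g x, x ∈ U → ρ g x ∈ U) → N ≤ U := by
  obtain ⟨s, hs⟩ := finite_orbit ρ hsm v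
  set O : Set V := Set.range fun g => ρ g v with hO
  have hOfin : O.Finite := by
    apply Set.Finite.subset (s.finite_toSet.image fun g => ρ g v)
    rintro _ ⟨g, rfl⟩
    obtain ⟨g', hg', he⟩ := hs g
    exact ⟨g', hg', he.symm⟩
  refine ⟨Submodule.span K O, ?_, ?_, ?_, ?_⟩
  · exact Submodule.subset_span ⟨1, by simp⟩
  · exact FiniteDimensional.span_of_finite K hOfin
  · intro g x hx
    have hmap : Submodule.map (ρ g) (Submodule.span K O) ≤ Submodule.span K O := by
      rw [Submodule.map_span]
      apply Submodule.span_mono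
      rintro _ ⟨_, ⟨g', rfl⟩, rfl⟩
      refine ⟨g * g', ?_⟩
      show ρ (g * g') v = ρ g (ρ g' v)
      rw [map_mul, Module.End.mul_apply]
    exact hmap ⟨x, hx, rfl⟩
  · intro U hvU hUinv
    apply Submodule.span_le.2
    rintro _ ⟨g, rfl⟩
    exact hUinv g v hvU

theorem findim_S [IsTopologicalGroup G] [CompactSpace G] {S : Type} [AddCommGroup S]
    [Module k S] (ρS : G →* S →ₗ[k] S) (hsm : IsSmoothRep ρS) (hirr : IsIrrRep ρS) :
    FiniteDimensional k S := by
  obtain ⟨hnt, hsimp⟩ := hirr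
  obtain ⟨v, hv⟩ := exists_ne (0 : S)
  obtain ⟨N, hvN, hNfd, hNinv, -⟩ := span_orbit ρS hsm v
  have hN : N = ⊤ := by
    rcases hsimp N hNinv with h | h
    · exact absurd (h ▸ hvN) (by simpa using hv)
    · exact h
  rw [hN] at hNfd
  exact (Submodule.topEquiv (R := k) (M := S)).finiteDimensional

theorem essential_bc [IsTopologicalGroup G] [CompactSpace G]
    {S I : Type} [AddCommGroup S] [Module k S] [AddCommGroup I] [Module k I]
    (ρS : G →* S →ₗ[k] S) (ρI : G →* I →ₗ[k] I) (hsmI : IsSmoothRep ρI)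
    (ι : S →ₗ[k] I) (hess : IsEssentialEmb ρS ρI ι) :
    ∀ U : Submodule k' (k' ⊗[k] I),
      (∀ g x, x ∈ U → bcRep k' ρI g x ∈ U) → U ≠ ⊥ →
      ∃ x ∈ U, x ≠ 0 ∧ x ∈ LinearMap.range (ι.baseChange k') := by
  classical
  intro U hUinv hUne
  obtain ⟨u, huU, hune⟩ := Submodule.exists_mem_ne_zero_of_ne_bot hUne
  set ρ' : G →* (k' ⊗[k] I) →ₗ[k] (k' ⊗[k] I) := resMon (bcRep k' ρI) with hρ'
  have hsm' : IsSmoothRep ρ' := smooth_resMon (smooth_bcRep hsmI)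
  obtain ⟨M, huM, hMfd, hMinv, hMle⟩ := span_orbit ρ' hsm' u
  have hMU : M ≤ Submodule.restrictScalars k U :=
    hMle _ huU (fun g x hx => hUinv g x hx)
  have hMne : M ≠ ⊥ := fun h => hune (by simpa [h] using huM)
  obtain ⟨T, hTM, hTne, hTinv, hTmin⟩ :=
    exists_minimal (fun g x => ρ' g x) (Module.finrank k M) M hMfd rfl hMne hMinv
  have hrangeinv : ∀ g y, y ∈ LinearMap.range ι → ρI g y ∈ LinearMap.range ι := by
    rintro g _ ⟨s0, rfl⟩
    exact ⟨ρS g s0, hess.2.1 g s0⟩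
  have hTrange : ∀ x ∈ T, x ∈ LinearMap.range (ι.baseChange k') := by
    intro x hxT
    have hctr : ∀ l : k' →ₗ[k] k, ctr l x ∈ LinearMap.range ι := by
      intro l
      set Wl : Submodule k I := Submodule.map (ctr l) T with hWl
      by_cases hbot : Wl = ⊥
      · have hmem : ctr l x ∈ Wl := Submodule.mem_map_of_mem hxT
        rw [hbot, Submodule.mem_bot] at hmem
        rw [hmem]; exact zero_mem _
      · have hWinv : ∀ g y, y ∈ Wl → ρI g y ∈ Wl := by
          rintro g _ ⟨z, hz, rfl⟩
          rw [← ctr_bc (k' := k')]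
          exact Submodule.mem_map_of_mem (hTinv g z hz)
        have hWmin : ∀ W' : Submodule k I, W' ≤ Wl →
            (∀ g y, y ∈ W' → ρI g y ∈ W') → W' ≠ ⊥ → W' = Wl := by
          intro W' hle hinv' hne'
          set T' : Submodule k (k' ⊗[k] I) := T ⊓ Submodule.comap (ctr l) W' with hT'
          have hT'inv : ∀ g z, z ∈ T' → ρ' g z ∈ T' := by
            intro g z hz
            rw [hT', Submodule.mem_inf] at hz ⊢
            refine ⟨hTinv g z hz.1, ?_⟩
            have hcb : ctr l (ρ' g z) = ρI g (ctr l z) := ctr_bc (k' := k') ρI l g z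
            rw [Submodule.mem_comap, hcb]
            exact hinv' g _ hz.2
          have hT'ne : T' ≠ ⊥ := by
            obtain ⟨w, hwW', hwne⟩ := Submodule.exists_mem_ne_zero_of_ne_bot hne'
            obtain ⟨z, hzT, hzw⟩ := hle hwW'
            intro hc
            have hzT' : z ∈ T' := by
              rw [hT', Submodule.mem_inf]
              exact ⟨hzT, by rw [Submodule.mem_comap, hzw]; exact hwW'⟩
            rw [hc, Submodule.mem_bot] at hzT'
            apply hwne
            rw [← hzw, hzT', map_zero]
          have heq := hTmin T' inf_le_left hT'inv hT'ne
          refine le_antisymm hle ?_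
          rw [hWl, ← heq]
          intro y hy
          obtain ⟨z, hz, rfl⟩ := Submodule.mem_map.1 hy
          rw [hT', Submodule.mem_inf] at hz
          exact hz.2
        obtain ⟨y, hyW, hyne, hyr⟩ := hess.2.2 Wl hWinv hbot
        have hWr : Wl ⊓ LinearMap.range ι = Wl := by
          apply hWmin
          · exact inf_le_left
          · intro g y hy
            rw [Submodule.mem_inf] at hy ⊢
            exact ⟨hWinv g y hy.1, hrangeinv g y hy.2⟩
          · intro hc
            apply hyne
            have hyin : y ∈ Wl ⊓ LinearMap.range ι := Submodule.mem_inf.2 ⟨hyW, hyr⟩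
            rw [hc, Submodule.mem_bot] at hyin
            exact hyin
        have hWle : Wl ≤ LinearMap.range ι := hWr ▸ inf_le_right
        exact hWle (Submodule.mem_map_of_mem hxT)
    set π := (LinearMap.range ι).mkQ with hπ
    have hz : π.lTensor k' x = 0 := by
      apply ctr_zero
      intro l
      rw [ctr_lTensor]
      have := hctr l
      rwa [← Submodule.Quotient.mk_eq_zero, ← Submodule.mkQ_apply] at this
    have hex : Function.Exact (ι.lTensor k') (π.lTensor k') :=
      Module.Flat.lTensor_exact k' (LinearMap.exact_map_mkQ_range ι)
    obtain ⟨y, hy⟩ := (hex x).mp hz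
    refine ⟨y, ?_⟩
    have hco : ι.baseChange k' y = ι.lTensor k' y :=
      congrFun (LinearMap.baseChange_eq_ltensor (f := ι)) y
    rw [hco, hy]
  obtain ⟨t, htT, htne⟩ := Submodule.exists_mem_ne_zero_of_ne_bot hTne
  exact ⟨t, hMU (hTM htT), htne, hTrange t htT⟩

end BC

namespace BC

variable {k : Type} [Field k] {k' : Type} [Field k'] [Algebra k k']
variable {G : Type} [Group G] [TopologicalSpace G]

variable (G) in
/-- The right-regular representation on locally constant functions. -/
def regRep (K M : Type) [Semiring K] [AddCommMonoid M] [Module K M] [IsTopologicalGroup G] :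
    G →* LocallyConstant G M →ₗ[K] LocallyConstant G M where
  toFun g₀ :=
    { toFun := fun f =>
        ⟨fun g => f (g * g₀), f.isLocallyConstant.comp_continuous (continuous_mul_right g₀)⟩
      map_add' := fun f₁ f₂ => by ext g; simp
      map_smul' := fun c f => by ext g; simp }
  map_one' := by ext f g; simp
  map_mul' g₁ g₂ := by ext f g; simp [mul_assoc]

@[simp] theorem regRep_apply (K M : Type) [Semiring K] [AddCommMonoid M] [Module K M]
    [IsTopologicalGroup G] (g₀ : G) (f : LocallyConstant G M) (g : G) :
    regRep G K M g₀ f g = f (g * g₀) := rfl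

theorem openSubgroupNhd [IsTopologicalGroup G] [CompactSpace G] [TotallyDisconnectedSpace G]
    [T2Space G] {U : Set G} (hU : IsOpen U) (h1 : (1 : G) ∈ U) :
    ∃ H : OpenSubgroup G, (H : Set G) ⊆ U := by
  obtain ⟨V, hVc, h1V, hVU⟩ := compact_exists_isClopen_in_isOpen hU h1
  obtain ⟨H, hH⟩ := IsTopologicalGroup.exist_openSubgroup_sub_clopen_nhds_of_one hVc h1V
  exact ⟨H, hH.trans hVU⟩

theorem smooth_regRep [IsTopologicalGroup G] [CompactSpace G] [TotallyDisconnectedSpace G]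
    [T2Space G] (K M : Type) [Field K] [AddCommGroup M] [Module K M] :
    IsSmoothRep (regRep G K M) := by
  intro f
  have hx : ∀ x : G, ∃ H : OpenSubgroup G, ∀ v ∈ H, f (x * v) = f x := by
    intro x
    have hop : IsOpen ((fun y => x * y) ⁻¹' {y | f y = f x}) :=
      (f.isLocallyConstant.isOpen_fiber (f x)).preimage (continuous_mul_left x)
    obtain ⟨H, hH⟩ := openSubgroupNhd hop (by simp)
    exact ⟨H, fun v hv => hH hv⟩
  choose Hs hHs using hx
  have hcover : (Set.univ : Set G) ⊆ ⋃ x : G, (x * ·) '' (Hs x : Set G) := by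
    intro x _
    exact Set.mem_iUnion.2 ⟨x, 1, (Hs x).one_mem, mul_one x⟩
  obtain ⟨t, ht⟩ := isCompact_univ.elim_finite_subcover _
    (fun x => (Homeomorph.mulLeft x).isOpenMap _ (Hs x).isOpen) hcover
  apply stab_open (regRep G K M) f (⋂ x ∈ t, (Hs x : Set G))
  · exact isOpen_biInter_finset fun x _ => (Hs x).isOpen
  · exact Set.mem_iInter₂.2 fun x _ => (Hs x).one_mem
  · intro n hn
    ext g
    obtain ⟨x, hxt, hmem⟩ := Set.mem_iUnion₂.1 (ht (Set.mem_univ g))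
    obtain ⟨v, hv, rfl⟩ := hmem
    have hnH : n ∈ Hs x := Set.mem_iInter₂.1 hn x hxt
    show f ((Homeomorph.mulLeft x) v * n) = f ((Homeomorph.mulLeft x) v)
    show f (x * v * n) = f (x * v)
    rw [mul_assoc, hHs x _ (mul_mem hv hnH), hHs x v hv]

/-- "Matrix coefficient" map of a smooth representation into locally constant functions. -/
noncomputable def orbmap {K V M : Type} [Field K] [AddCommGroup V] [Module K V]
    [AddCommMonoid M] [Module K M] [IsTopologicalGroup G]
    (ρ : G →* V →ₗ[K] V) (hsm : IsSmoothRep ρ) (lam : V →ₗ[K] M) :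
    V →ₗ[K] LocallyConstant G M where
  toFun v :=
    ⟨fun g => lam (ρ g v), by
      rw [IsLocallyConstant.iff_exists_open]
      intro g₀
      refine ⟨(g₀ * ·) '' {h : G | ρ h v = v},
        (Homeomorph.mulLeft g₀).isOpenMap _ (hsm v), ⟨1, by simp, mul_one g₀⟩, ?_⟩
      rintro _ ⟨h, hh, rfl⟩
      show lam (ρ (g₀ * h) v) = lam (ρ g₀ v)
      rw [map_mul, Module.End.mul_apply, hh]⟩
  map_add' v w := by ext g; simp
  map_smul' c v := by ext g; simp

@[simp] theorem orbmap_apply {K V M : Type} [Field K] [AddCommGroup V] [Module K V]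
    [AddCommMonoid M] [Module K M] [IsTopologicalGroup G]
    (ρ : G →* V →ₗ[K] V) (hsm : IsSmoothRep ρ) (lam : V →ₗ[K] M) (v : V) (g : G) :
    orbmap ρ hsm lam v g = lam (ρ g v) := rfl

theorem orbmap_equivariant {K V M : Type} [Field K] [AddCommGroup V] [Module K V]
    [AddCommMonoid M] [Module K M] [IsTopologicalGroup G]
    (ρ : G →* V →ₗ[K] V) (hsm : IsSmoothRep ρ) (lam : V →ₗ[K] M) (g₀ : G) (v : V) :
    orbmap ρ hsm lam (ρ g₀ v) = regRep G K M g₀ (orbmap ρ hsm lam v) := by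
  ext g
  show lam (ρ g (ρ g₀ v)) = lam (ρ (g * g₀) v)
  rw [map_mul, Module.End.mul_apply]

/-- Locally constant functions form an injective object: any equivariant map into them
extends along equivariant embeddings of smooth representations. -/
theorem lc_inj [IsTopologicalGroup G] (K M : Type) [Field K] [AddCommGroup M] [Module K M]
    {U W : Type} [AddCommGroup U] [Module K U] [AddCommGroup W] [Module K W]
    (ρU : G →* U →ₗ[K] U) (ρW : G →* W →ₗ[K] W) (hsmW : IsSmoothRep ρW)
    (ι₀ : U →ₗ[K] W) (hinj : Function.Injective ι₀)
    (heq : ∀ g u, ι₀ (ρU g u) = ρW g (ι₀ u))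
    (f : U →ₗ[K] LocallyConstant G M)
    (hfeq : ∀ g u, f (ρU g u) = regRep G K M g (f u)) :
    ∃ h : W →ₗ[K] LocallyConstant G M,
      (∀ g w, h (ρW g w) = regRep G K M g (h w)) ∧ ∀ u, h (ι₀ u) = f u := by
  obtain ⟨σ, hσ⟩ := LinearMap.exists_leftInverse_of_injective ι₀ (LinearMap.ker_eq_bot.2 hinj)
  let ev : LocallyConstant G M →ₗ[K] M :=
    { toFun := fun h => h 1
      map_add' := fun a b => by simp
      map_smul' := fun c a => by simp }
  let lam : W →ₗ[K] M := (ev ∘ₗ f) ∘ₗ σ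
  refine ⟨orbmap ρW hsmW lam, fun g w => orbmap_equivariant ρW hsmW lam g w, fun u => ?_⟩
  ext g
  rw [orbmap_apply, ← heq]
  have h1 : lam (ι₀ (ρU g u)) = f (ρU g u) 1 := by
    have h2 : σ (ι₀ (ρU g u)) = ρU g u := by
      have h3 := LinearMap.congr_fun hσ (ρU g u)
      simpa using h3
    simp only [lam, LinearMap.comp_apply, h2]
    rfl
  rw [h1, hfeq, regRep_apply, one_mul]

end BC

namespace BC

variable {k : Type} [Field k] {k' : Type} [Field k'] [Algebra k k']
variable {G : Type} [Group G] [TopologicalSpace G]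

instance lcTower (M : Type) [AddCommMonoid M] [Module k M] [Module k' M]
    [IsScalarTower k k' M] : IsScalarTower k k' (LocallyConstant G M) :=
  ⟨fun a b f => by
    ext g
    simp [LocallyConstant.smul_apply, smul_assoc]⟩

/-- Evaluation at a point, as a linear map. -/
def evmap (K M : Type) [Semiring K] [AddCommMonoid M] [Module K M] (g : G) :
    LocallyConstant G M →ₗ[K] M where
  toFun f := f g
  map_add' a b := by simp
  map_smul' c a := by simp

@[simp] theorem evmap_apply (K M : Type) [Semiring K] [AddCommMonoid M] [Module K M] (g : G)
    (f : LocallyConstant G M) : evmap K M g f = f g := rfl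

/-- Coefficient-wise algebra map on locally constant functions. -/
noncomputable def mapAlg (n : ℕ) :
    LocallyConstant G (Fin n → k) →ₗ[k] LocallyConstant G (Fin n → k') where
  toFun f := f.map fun v i => algebraMap k k' (v i)
  map_add' f₁ f₂ := by
    ext g i
    simp [LocallyConstant.map_apply, Function.comp, map_add]
  map_smul' c f := by
    ext g i
    simp [LocallyConstant.map_apply, Function.comp, LocallyConstant.smul_apply,
      Pi.smul_apply, smul_eq_mul, map_mul, Algebra.smul_def]

@[simp] theorem mapAlg_apply (n : ℕ) (f : LocallyConstant G (Fin n → k)) (g : G) (i : Fin n) :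
    mapAlg (k' := k') n f g i = algebraMap k k' (f g i) := rfl

/-- The base-change comparison map `k' ⊗ C(G, kⁿ) → C(G, k'ⁿ)`. -/
noncomputable def theta (n : ℕ) :
    (k' ⊗[k] LocallyConstant G (Fin n → k)) →ₗ[k'] LocallyConstant G (Fin n → k') :=
  (mapAlg (k' := k') (G := G) n).liftBaseChange k'

@[simp] theorem theta_tmul (n : ℕ) (c : k') (f : LocallyConstant G (Fin n → k)) :
    theta n (c ⊗ₜ f) = c • mapAlg (k' := k') n f :=
  LinearMap.liftBaseChange_tmul _ _ _ _

theorem theta_equivariant [IsTopologicalGroup G] (n : ℕ) (g : G)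
    (x : k' ⊗[k] LocallyConstant G (Fin n → k)) :
    theta n (bcRep k' (regRep G k (Fin n → k)) g x)
      = regRep G k' (Fin n → k') g (theta n x) := by
  rw [bcRep_apply]
  induction x using TensorProduct.induction_on with
  | zero => simp only [LinearMap.map_zero]
  | tmul c f =>
    rw [LinearMap.baseChange_tmul, theta_tmul, theta_tmul, map_smul]
    congr 1
  | add a b ha hb => simp only [map_add, ha, hb]

theorem theta_inj (n : ℕ) :
    Function.Injective (theta (k := k) (k' := k') (G := G) n) := by
  have h0 : ∀ x : k' ⊗[k] LocallyConstant G (Fin n → k), theta n x = 0 → x = 0 := by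
    intro x hx
    apply ctr_zero
    intro l
    have key : ∀ (y : k' ⊗[k] LocallyConstant G (Fin n → k)) (g : G) (i : Fin n),
        l (theta n y g i) = ctr l y g i := by
      intro y
      induction y using TensorProduct.induction_on with
      | zero =>
        intro g i
        rw [LinearMap.map_zero, LinearMap.map_zero]
        show l ((0 : LocallyConstant G (Fin n → k')) g i) = (0 : LocallyConstant G (Fin n → k)) g i
        show l 0 = 0
        exact map_zero l
      | tmul c f =>
        intro g i
        have h1 : theta (k' := k') n (c ⊗ₜ[k] f) g i = c * algebraMap k k' (f g i) := by
          rw [theta_tmul]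
          rfl
        have h2 : ctr (k' := k') l (c ⊗ₜ[k] f) g i = l c * f g i := by
          rw [ctr_tmul]
          rfl
        rw [h1, h2, mul_comm c, ← Algebra.smul_def, map_smul, smul_eq_mul]
        exact mul_comm _ _
      | add a b ha hb =>
        intro g i
        simp only [map_add, LocallyConstant.add_apply, Pi.add_apply, ha g i, hb g i]
    have hc : ∀ (g : G) (i : Fin n), ctr (k' := k') l x g i = 0 := by
      intro g i
      rw [← key x g i, hx]
      simp
    ext g i
    show ((ctr (k := k) l) x) g i = (0 : Fin n → k) i
    rw [hc g i]
    rfl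
  intro x y hxy
  have hsub : theta (k := k) (k' := k') (G := G) n (x - y) = 0 := by
    rw [LinearMap.map_sub, hxy, sub_self]
  exact sub_eq_zero.1 (h0 (x - y) hsub)

theorem theta_surj [CompactSpace G] (n : ℕ) :
    Function.Surjective (theta (k := k) (k' := k') (G := G) n) := by
  classical
  intro f
  have hfin := f.range_finite
  set t := hfin.toFinset with ht
  set χ : (Fin n → k') → Fin n → LocallyConstant G (Fin n → k) :=
    fun v i => f.map fun w => if w = v then Pi.single i (1 : k) else 0 with hχ
  refine ⟨∑ v ∈ t, ∑ i : Fin n, (v i) ⊗ₜ[k] χ v i, ?_⟩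
  have hsum : theta (k' := k') n (∑ v ∈ t, ∑ i : Fin n, (v i) ⊗ₜ[k] χ v i)
      = ∑ v ∈ t, ∑ i : Fin n, theta (k' := k') n ((v i) ⊗ₜ[k] χ v i) := by
    rw [map_sum]
    exact Finset.sum_congr rfl fun v _ => map_sum _ _ _
  ext g j
  rw [hsum]
  have hev : (∑ v ∈ t, ∑ i : Fin n, theta (k' := k') n ((v i) ⊗ₜ[k] χ v i)) g
      = ∑ v ∈ t, ∑ i : Fin n, (theta (k' := k') n ((v i) ⊗ₜ[k] χ v i)) g := by
    rw [← evmap_apply k' (Fin n → k') g, map_sum]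
    refine Finset.sum_congr rfl fun v _ => ?_
    rw [map_sum]
    rfl
  rw [hev]
  rw [Finset.sum_apply, ]
  have hswap : ∀ v ∈ t, (∑ i : Fin n, (theta (k' := k') n ((v i) ⊗ₜ[k] χ v i)) g) j
      = ∑ i : Fin n, (v i) * algebraMap k k' ((if f g = v then Pi.single i (1 : k) else (0 : Fin n → k)) j) := by
    intro v _
    rw [Finset.sum_apply]
    refine Finset.sum_congr rfl fun i _ => ?_
    simp only [theta_tmul, LocallyConstant.smul_apply, Pi.smul_apply, smul_eq_mul,
      mapAlg_apply, hχ, LocallyConstant.map_apply, Function.comp_apply]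
  rw [Finset.sum_congr rfl hswap]
  rw [Finset.sum_eq_single (f g)]
  · simp only [eq_self_iff_true, if_true]
    have hstep : ∀ i : Fin n, f g i * algebraMap k k' ((Pi.single i 1 : Fin n → k) j)
        = if j = i then f g i else 0 := by
      intro i
      rw [Pi.single_apply, apply_ite (algebraMap k k'), map_one, map_zero]
      by_cases hji : j = i
      · rw [if_pos hji, if_pos hji, mul_one]
      · rw [if_neg hji, if_neg hji, mul_zero]
    rw [Finset.sum_congr rfl fun i _ => hstep i, Finset.sum_ite_eq]
    simp
  · intro v hvt hvne
    refine Finset.sum_eq_zero fun i _ => ?_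
    rw [if_neg (fun h => hvne h.symm)]
    simp
  · intro hng
    exact absurd (hfin.mem_toFinset.2 ⟨g, rfl⟩) hng

end BC

namespace BC

variable {k : Type} [Field k] {k' : Type} [Field k'] [Algebra k k']
variable {G : Type} [Group G] [TopologicalSpace G]

theorem bc_equivariant {V W : Type} [AddCommGroup V] [Module k V] [AddCommGroup W] [Module k W]
    (ρV : G →* V →ₗ[k] V) (ρW : G →* W →ₗ[k] W) (f : V →ₗ[k] W)
    (hf : ∀ g v, f (ρV g v) = ρW g (f v)) (g : G) (x : k' ⊗[k] V) :
    f.baseChange k' (bcRep k' ρV g x) = bcRep k' ρW g (f.baseChange k' x) := by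
  have hcomp : (f.baseChange k') ∘ₗ ((ρV g).baseChange k')
      = ((ρW g).baseChange k') ∘ₗ (f.baseChange k') := by
    rw [← LinearMap.baseChange_comp, ← LinearMap.baseChange_comp]
    congr 1
    ext v
    exact hf g v
  rw [bcRep_apply, bcRep_apply]
  exact LinearMap.congr_fun hcomp x

end BC

/-- Let `𝒢` be a profinite group with an open pro-p subgroup and `k` a
finite field such that every irreducible smooth `k`-representation of `𝒢` is absolutely
irreducible.  If `S` is an irreducible smooth `k`-representation and `ι : S ↪ I_S` an
injective envelope in smooth `k`-representations, then for any field extension `k'` of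
`k`, the base change `ι ⊗ k' : S ⊗_k k' ↪ I_S ⊗_k k'` is an injective envelope in the
category of smooth `k'`-representations of `𝒢`. -/
theorem baseChange_injective_envelope
    (p : ℕ) [Fact p.Prime] (k : Type) [Field k] [Fintype k]
    (k' : Type) [Field k'] [Algebra k k']
    (G : Type) [Group G] [TopologicalSpace G] [IsTopologicalGroup G]
    [CompactSpace G] [TotallyDisconnectedSpace G] [T2Space G]
    (hP : ∃ P : Subgroup G, IsOpen (P : Set G) ∧ IsProP p P)
    -- every irreducible smooth `k`-representation of `𝒢` is absolutely irreducible
    (habs : ∀ (T : Type) (_ : AddCommGroup T) (_ : Module k T)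
      (ρT : G →* T →ₗ[k] T), IsSmoothRep ρT → IsIrrRep ρT →
      ∀ (k'' : Type) (_ : Field k'') (_ : Algebra k k''), IsIrrRep (bcRep k'' ρT))
    (S I : Type) [AddCommGroup S] [Module k S] [AddCommGroup I] [Module k I]
    (ρS : G →* S →ₗ[k] S) (ρI : G →* I →ₗ[k] I)
    (hsmS : IsSmoothRep ρS) (hsmI : IsSmoothRep ρI) (hirr : IsIrrRep ρS)
    (ι : S →ₗ[k] I) (henv : IsInjEnvelopeRep ρS ρI ι) :
    IsSmoothRep (bcRep k' ρS) ∧ IsSmoothRep (bcRep k' ρI) ∧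
    IsInjEnvelopeRep (bcRep k' ρS) (bcRep k' ρI) (ι.baseChange k') := by
  classical
  have hsmS' : IsSmoothRep (bcRep k' ρS) := BC.smooth_bcRep hsmS
  have hsmI' : IsSmoothRep (bcRep k' ρI) := BC.smooth_bcRep hsmI
  refine ⟨hsmS', hsmI', ?_, ?_, ?_, ?_⟩
  · -- injectivity of the object I ⊗ k'
    have hfd : FiniteDimensional k S := BC.findim_S ρS hsmS hirr
    set n := Module.finrank k S with hn
    set b : Module.Basis (Fin n) k S := Module.finBasis k S with hb
    obtain ⟨σ, hσ⟩ := LinearMap.exists_leftInverse_of_injective ι (LinearMap.ker_eq_bot.2 henv.2.1)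
    set lam : I →ₗ[k] (Fin n → k) := LinearMap.pi (fun i => (b.coord i) ∘ₗ σ) with hlam
    set j := BC.orbmap ρI hsmI lam with hj
    have jeq : ∀ g x, j (ρI g x) = BC.regRep G k (Fin n → k) g (j x) :=
      fun g x => BC.orbmap_equivariant ρI hsmI lam g x
    have jinj : Function.Injective j := by
      rw [← LinearMap.ker_eq_bot]
      by_contra hc
      have hkerinv : ∀ g x, x ∈ LinearMap.ker j → ρI g x ∈ LinearMap.ker j := by
        intro g x hx
        rw [LinearMap.mem_ker] at hx ⊢
        rw [jeq, hx, map_zero]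
      obtain ⟨x, hxker, hxne, hxr⟩ := henv.2.2.2 (LinearMap.ker j) hkerinv hc
      obtain ⟨s0, rfl⟩ := hxr
      apply hxne
      have hs0 : s0 = 0 := by
        have h1 : ∀ g : G, lam (ρI g (ι s0)) = 0 := by
          intro g
          have h2 := LinearMap.mem_ker.1 hxker
          have h3 : j (ι s0) g = (0 : LocallyConstant G (Fin n → k)) g := by rw [h2]
          rwa [BC.orbmap_apply] at h3
        have h3 := h1 1
        rw [map_one, Module.End.one_apply] at h3
        have h4 : ∀ i : Fin n, b.coord i (σ (ι s0)) = 0 := by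
          intro i
          have h5 := congrFun h3 i
          simpa [hlam, LinearMap.pi_apply] using h5
        have h5 : σ (ι s0) = s0 := by simpa using LinearMap.congr_fun hσ s0
        rw [h5] at h4
        exact (Module.Basis.forall_coord_eq_zero_iff b).1 h4
      rw [hs0, map_zero]
    obtain ⟨r, req, hrj⟩ := henv.1 I (LocallyConstant G (Fin n → k)) _ _ _ _ ρI
      (BC.regRep G k (Fin n → k)) hsmI (BC.smooth_regRep k (Fin n → k)) j jinj jeq
      LinearMap.id (fun g u => rfl)
    set Θ := BC.theta (k := k) (k' := k') (G := G) n with hΘ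
    have hbij : Function.Bijective Θ := ⟨BC.theta_inj n, BC.theta_surj n⟩
    set E := LinearEquiv.ofBijective Θ hbij with hE
    have hEapp : ∀ y, E y = Θ y := fun y => rfl
    have hEsymmΘ : ∀ z, E.symm (Θ z) = z := fun z => by
      rw [← hEapp z]; exact E.symm_apply_apply z
    have hEsymm_eq : ∀ (g : G) y, E.symm (BC.regRep G k' (Fin n → k') g y)
        = bcRep k' (BC.regRep G k (Fin n → k)) g (E.symm y) := by
      intro g y
      have hy : y = Θ (E.symm y) := by rw [← hEapp]; exact (E.apply_symm_apply y).symm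
      conv_lhs => rw [hy]
      rw [← BC.theta_equivariant, hEsymmΘ]
    intro A B instA instAm instB instBm ρA ρB hsmA hsmB ι₀ hι₀ hι₀eq f₀ hf₀eq
    have hjbc_eq : ∀ (g : G) x, (j.baseChange k') (bcRep k' ρI g x)
        = bcRep k' (BC.regRep G k (Fin n → k)) g (j.baseChange k' x) :=
      fun g x => BC.bc_equivariant ρI (BC.regRep G k (Fin n → k)) j jeq g x
    set emb : (k' ⊗[k] I) →ₗ[k'] LocallyConstant G (Fin n → k') := Θ ∘ₗ j.baseChange k'
      with hemb
    have hembeq : ∀ (g : G) x, emb (bcRep k' ρI g x)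
        = BC.regRep G k' (Fin n → k') g (emb x) := by
      intro g x
      show Θ (j.baseChange k' (bcRep k' ρI g x)) = _
      rw [hjbc_eq, BC.theta_equivariant]
      rfl
    obtain ⟨H, Heq, hH⟩ := BC.lc_inj k' (Fin n → k') ρA ρB hsmB ι₀ hι₀ hι₀eq
      (emb ∘ₗ f₀) (fun g u => by
        show emb (f₀ (ρA g u)) = _
        rw [hf₀eq, hembeq]
        rfl)
    refine ⟨(r.baseChange k') ∘ₗ (E.symm.toLinearMap) ∘ₗ H, ?_, ?_⟩
    · intro g w
      show r.baseChange k' (E.symm (H (ρB g w))) = _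
      rw [Heq, hEsymm_eq]
      exact BC.bc_equivariant (BC.regRep G k (Fin n → k)) ρI r req g (E.symm (H w))
    · intro u
      show r.baseChange k' (E.symm (H (ι₀ u))) = f₀ u
      rw [hH]
      show r.baseChange k' (E.symm (Θ (j.baseChange k' (f₀ u)))) = f₀ u
      rw [hEsymmΘ]
      have hco : r ∘ₗ j = LinearMap.id := LinearMap.ext hrj
      have hstep : r.baseChange k' (j.baseChange k' (f₀ u)) = ((r ∘ₗ j).baseChange k') (f₀ u) := by
        rw [LinearMap.baseChange_comp]
        rfl
      rw [hstep, hco, LinearMap.baseChange_id]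
      rfl
  · have hlt : Function.Injective (ι.lTensor k') :=
      Module.Flat.lTensor_preserves_injective_linearMap ι henv.2.1
    rw [show (⇑(ι.baseChange k') : k' ⊗[k] S → k' ⊗[k] I) = ⇑(ι.lTensor k') from
      LinearMap.baseChange_eq_ltensor ι]
    exact hlt
  · exact fun g v => BC.bc_equivariant ρS ρI ι henv.2.2.1 g v
  · exact BC.essential_bc ρS ρI hsmI ι henv.2
end

section
/- Let L be a finite extension of ℚ_p with ring of integers A, uniformizer ϖ_L and residue field k. Let M be a torsion-free compact linearly topological A-module (so M ≅ ∏_{i∈I} A for some set I). Then the natural map Hom_A^{cont}(M, A) ⊗_A k → Hom_A^{cont}(M, k) is an isomorphism of A-modules; equivalently, every continuous A-linear map M → k lifts to a continuous A-linear map M → A. -/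
/-- Let `A` be the ring of integers of a finite extension `L` of `ℚ_p`
(a complete discrete valuation ring with finite residue field `k`, endowed with its
`𝔪`-adic topology), and let `M ≅ ∏_{i ∈ I} A` be a torsion-free compact linearly
topological `A`-module, realized as a product `I → A` with the product topology.
Then every continuous `A`-linear map `M → k` (with `k` discrete, i.e. with open
kernel) lifts to a continuous `A`-linear map `M → A`; equivalently the natural map
`Hom_A^{cont}(M, A) ⊗_A k → Hom_A^{cont}(M, k)` is an isomorphism. -/
theorem continuous_dual_lifts
    (A : Type) [CommRing A] [IsDomain A] [IsDiscreteValuationRing A]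
    [TopologicalSpace A] [IsTopologicalRing A]
    (hadic : IsAdic (IsLocalRing.maximalIdeal A))
    [IsAdicComplete (IsLocalRing.maximalIdeal A) A]
    [Finite (IsLocalRing.ResidueField A)]
    (I : Type)
    (φ : (I → A) →ₗ[A] IsLocalRing.ResidueField A)
    (hφ : IsOpen {x : I → A | φ x = 0}) :
    ∃ ψ : (I → A) →ₗ[A] A, Continuous ψ ∧
      ∀ x : I → A, IsLocalRing.residue A (ψ x) = φ x := by
  classical
  have h0 : (0 : I → A) ∈ {x : I → A | φ x = 0} := by simp
  obtain ⟨S, u, hu, hsub⟩ := isOpen_pi_iff.mp hφ 0 h0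
  choose a ha using fun j : I =>
    IsLocalRing.residue_surjective (R := A) (φ (Pi.single j 1))
  refine ⟨{ toFun := fun x => ∑ j ∈ S, x j * a j,
            map_add' := ?_, map_smul' := ?_ }, ?_, ?_⟩
  · intro x y
    simp [add_mul, Finset.sum_add_distrib]
  · intro c x
    simp [Finset.mul_sum, mul_assoc]
  · exact continuous_finset_sum _ fun j _ => (continuous_apply j).mul continuous_const
  · intro x
    have hxy : φ x = φ (∑ j ∈ S, Pi.single j (x j)) := by
      have hmem : x - ∑ j ∈ S, Pi.single j (x j) ∈ {x : I → A | φ x = 0} := by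
        apply hsub
        intro i hi
        have hsum : (∑ j ∈ S, Pi.single j (x j)) i = x i := by
          simp only [Finset.sum_apply, Pi.single_apply]
          rw [Finset.sum_ite_eq S i (fun j => x j)]
          simp [Finset.mem_coe.mp hi]
        have : (x - ∑ j ∈ S, Pi.single j (x j)) i = 0 := by
          simp [hsum]
        rw [this]
        exact (hu i hi).2
      have := hmem
      simp only [Set.mem_setOf_eq, map_sub, sub_eq_zero] at this
      exact this
    rw [hxy, map_sum]
    simp only [LinearMap.coe_mk, AddHom.coe_mk]
    rw [map_sum]
    congr 1
    ext j
    have hsingle : (Pi.single j (x j) : I → A) = x j • (Pi.single j 1 : I → A) := by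
      ext i
      simp [Pi.single_apply, Pi.smul_apply, mul_comm]
    rw [hsingle, map_smul, Algebra.smul_def, IsLocalRing.ResidueField.algebraMap_eq,
      map_mul, ha j]
end

section
/- Let F be a finite extension of ℚ_p, G := GL₂(F), L a finite extension of ℚ_p, and V an absolutely irreducible finite-dimensional L-linear representation of G (continuous, or abstract). If G stabilizes an A-lattice in V, where A is the ring of integers of L, then dim_L V = 1, i.e. V is a character. -/
set_option maxHeartbeats 1000000
set_option synthInstance.maxHeartbeats 400000

open scoped TensorProduct

lemma kill_aux {R M G : Type*} [CommRing R] [AddCommGroup M] [Module R M] [Group G]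
    (I : Ideal R) (hbot : (⨅ n : ℕ, (I ^ n • ⊤ : Submodule R M)) = ⊥)
    (hfin : ∀ n : ℕ, Finite (M ⧸ (I ^ n • ⊤ : Submodule R M)))
    (φ : G →* Module.End R M) (g : G)
    (hdiv : ∀ N : ℕ, 0 < N → ∃ h : G, h ^ N = g) :
    φ g = 1 := by
  have key : ∀ (n : ℕ) (m : M), φ g m - m ∈ (I ^ n • ⊤ : Submodule R M) := by
    intro n m
    set P : Submodule R M := I ^ n • ⊤ with hP
    have hle : ∀ f : Module.End R M, P ≤ P.comap f := by
      intro f x hx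
      refine Submodule.smul_induction_on hx (fun r hr y _ => ?_)
        (fun a b ha hb => Submodule.add_mem _ ha hb)
      exact Submodule.mem_comap.mpr
        (by rw [map_smul]; exact Submodule.smul_mem_smul hr Submodule.mem_top)
    let qh : Module.End R M →* Module.End R (M ⧸ P) :=
    { toFun := fun f => P.mapQ P f (hle f)
      map_one' := LinearMap.ext fun x => by
        obtain ⟨y, rfl⟩ := Submodule.Quotient.mk_surjective _ x
        simp [Submodule.mapQ_apply]
      map_mul' := fun f₁ f₂ => LinearMap.ext fun x => by
        obtain ⟨y, rfl⟩ := Submodule.Quotient.mk_surjective _ x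
        simp [Submodule.mapQ_apply, Module.End.mul_apply] }
    haveI := hfin n
    haveI : Finite (Module.End R (M ⧸ P)) :=
      Finite.of_injective _ (DFunLike.coe_injective (F := Module.End R (M ⧸ P)))
    obtain ⟨h, hh⟩ := hdiv (Nat.card (Module.End R (M ⧸ P))ˣ) Nat.card_pos
    have h1 : (qh.comp φ).toHomUnits g = 1 := by
      rw [← hh, map_pow]; exact pow_card_eq_one'
    have h2 : qh (φ g) = 1 := by
      have := congrArg Units.val h1
      simpa using this
    have h3 : P.mapQ P (φ g) (hle (φ g)) = 1 := h2
    have h4 := congrArg (fun f : Module.End R (M ⧸ P) => f (Submodule.Quotient.mk m)) h3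
    simp only [Submodule.mapQ_apply, Module.End.one_apply] at h4
    exact (Submodule.Quotient.eq P).mp h4
  ext m
  have hm : φ g m - m ∈ (⨅ n : ℕ, (I ^ n • ⊤ : Submodule R M)) :=
    Submodule.mem_iInf _ |>.mpr fun n => key n m
  rw [hbot, Submodule.mem_bot] at hm
  simpa [sub_eq_zero] using hm

/-- Let `F` be a finite extension of `ℚ_p`, `G = GL₂(F)`, `L` a finite
extension of `ℚ_p` with ring of integers `A` (the integral closure of `ℤ_p` in `L`),
and `V` an absolutely irreducible finite-dimensional `L`-linear representation of `G`.
If `G` stabilizes an `A`-lattice in `V` (a finitely generated `A`-submodule spanning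
`V` over `L`), then `dim_L V = 1`, i.e. `V` is a character. -/
theorem dim_one_of_stable_lattice
    (p : ℕ) [Fact p.Prime]
    (F L : Type) [Field F] [Field L]
    [Algebra ℚ_[p] F] [FiniteDimensional ℚ_[p] F]
    [Algebra ℚ_[p] L] [FiniteDimensional ℚ_[p] L]
    [Algebra ℤ_[p] L] [IsScalarTower ℤ_[p] ℚ_[p] L]
    (V : Type) [AddCommGroup V] [Module L V] [FiniteDimensional L V]
    (ρ : GL (Fin 2) F →* (V →ₗ[L] V))
    -- `V` is absolutely irreducible: after any field extension `L'` of `L`, the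
    -- base-changed representation has no invariant subspaces besides `⊥` and `⊤`,
    -- and is nonzero.
    (habs : ∀ (L' : Type) [Field L'] [Algebra L L'],
      (⊤ : Submodule L' (L' ⊗[L] V)) ≠ ⊥ ∧
      ∀ U : Submodule L' (L' ⊗[L] V),
        (∀ (g : GL (Fin 2) F) (x : L' ⊗[L] V), x ∈ U → (ρ g).baseChange L' x ∈ U) →
        U = ⊥ ∨ U = ⊤)
    [Module (integralClosure ℤ_[p] L) V] [IsScalarTower (integralClosure ℤ_[p] L) L V]
    (Λ : Submodule (integralClosure ℤ_[p] L) V)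
    (hfg : Λ.FG)
    (hspan : Submodule.span L (Λ : Set V) = ⊤)
    (hstab : ∀ (g : GL (Fin 2) F), ∀ v ∈ Λ, ρ g v ∈ Λ) :
    Module.finrank L V = 1 := by
  classical
  haveI hchF : CharZero F := charZero_of_injective_algebraMap (algebraMap ℚ_[p] F).injective
  -- ℤ_p-module structure on the lattice via the abstract A-module structure
  letI : Module ℤ_[p] ↥Λ := Module.compHom _ (algebraMap ℤ_[p] (integralClosure ℤ_[p] L))
  haveI : IsScalarTower ℤ_[p] (integralClosure ℤ_[p] L) ↥Λ :=
    ⟨fun z a x => by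
      show (z • a) • x = (algebraMap ℤ_[p] (integralClosure ℤ_[p] L) z) • a • x
      rw [Algebra.smul_def, mul_smul]⟩
  haveI : Module.Finite (integralClosure ℤ_[p] L) ↥Λ := Module.Finite.iff_fg.mpr hfg
  haveI : Module.Finite ℤ_[p] (integralClosure ℤ_[p] L) :=
    IsIntegralClosure.finite ℤ_[p] ℚ_[p] L (integralClosure ℤ_[p] L)
  haveI : Module.Finite ℤ_[p] ↥Λ := Module.Finite.trans (integralClosure ℤ_[p] L) ↥Λ
  -- the restriction of ρ to the lattice, as ℤ-linear endomorphisms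
  let rmon : GL (Fin 2) F →* Module.End ℤ ↥Λ :=
  { toFun := fun g => AddMonoidHom.toIntLinearMap
      { toFun := fun x => ⟨ρ g x, hstab g x x.2⟩
        map_zero' := Subtype.ext (map_zero (ρ g))
        map_add' := fun x y => Subtype.ext (map_add (ρ g) x.1 y.1) }
    map_one' := LinearMap.ext fun x => Subtype.ext (by
      show ρ 1 (x : V) = (x : V)
      rw [map_one]; rfl)
    map_mul' := fun g h => LinearMap.ext fun x => Subtype.ext (by
      show ρ (g * h) (x : V) = ρ g (ρ h (x : V))
      rw [map_mul]; rfl) }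
  set I₀ : Ideal ℤ := Ideal.span {(p : ℤ)} with hI₀
  set Pn : ℕ → Submodule ℤ ↥Λ := fun n => I₀ ^ n • ⊤ with hPn
  -- interaction of integer scalars with the ℤ_p-module structure
  have hzsmul : ∀ (t : ℤ) (x : ↥Λ), ((t : ℤ_[p])) • x = t • x := fun t x =>
    Int.cast_smul_eq_zsmul ℤ_[p] t x
  have hbz : ∀ (b : ℕ) (y : ↥Λ), ((b : ℤ)) • y = ((b : ℤ_[p])) • y := by
    intro b y
    rw [← hzsmul (b : ℤ) y]
    norm_num
  have hpn : ∀ (n : ℕ) (d : ℤ_[p]) (x : ↥Λ), ((p : ℤ_[p]) ^ n * d) • x ∈ Pn n := by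
    intro n d x
    have h1 : ((p : ℤ_[p]) ^ n * d) • x = ((p : ℤ) ^ n) • (d • x) := by
      rw [mul_smul, ← hzsmul ((p : ℤ) ^ n) (d • x)]
      norm_num
    rw [h1]
    exact Submodule.smul_mem_smul
      (Ideal.pow_mem_pow (Ideal.mem_span_singleton_self _) n) Submodule.mem_top
  -- the Krull intersection property, transferred from ℤ_p
  have hIp : (Ideal.span {(p : ℤ_[p])}) ≠ ⊤ := fun h =>
    (mem_nonunits_iff.mp PadicInt.p_nonunit) (Ideal.span_singleton_eq_top.mp h)
  have hbot : (⨅ n : ℕ, Pn n) = ⊥ := by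
    have hK : (⨅ n : ℕ, ((Ideal.span {(p : ℤ_[p])}) ^ n • ⊤ : Submodule ℤ_[p] ↥Λ)) = ⊥ :=
      Ideal.iInf_pow_smul_eq_bot_of_isLocalRing (M := ↥Λ) _ hIp
    rw [eq_bot_iff]
    intro x hx
    rw [Submodule.mem_iInf] at hx
    have hx' : x ∈ (⊥ : Submodule ℤ_[p] ↥Λ) := by
      rw [← hK, Submodule.mem_iInf]
      intro n
      refine Submodule.smul_induction_on (hx n) (fun r hr y _ => ?_)
        (fun a b ha hb => Submodule.add_mem _ ha hb)
      rw [hI₀, Ideal.span_singleton_pow, Ideal.mem_span_singleton] at hr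
      obtain ⟨t, rfl⟩ := hr
      have : ((p : ℤ) ^ n * t) • y = ((p : ℤ_[p]) ^ n * (t : ℤ_[p])) • y := by
        rw [← hzsmul ((p : ℤ) ^ n * t) y]
        norm_num
      rw [this, mul_smul]
      exact Submodule.smul_mem_smul
        (Ideal.pow_mem_pow (Ideal.mem_span_singleton_self _) n) Submodule.mem_top
    simpa using hx'
  have hfin : ∀ n : ℕ, Finite (↥Λ ⧸ Pn n) := by
    intro n
    obtain ⟨k, s, hsspan⟩ := Module.Finite.exists_fin (R := ℤ_[p]) (M := ↥Λ)
    haveI : NeZero (p ^ n) := ⟨pow_ne_zero n (Nat.Prime.ne_zero Fact.out)⟩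
    refine Finite.of_surjective (fun c : Fin k → ZMod (p ^ n) =>
      Submodule.Quotient.mk (p := Pn n) (∑ i, (((c i).val : ℤ)) • s i)) ?_
    intro q
    obtain ⟨m, rfl⟩ := Submodule.Quotient.mk_surjective _ q
    have hm : m ∈ Submodule.span ℤ_[p] (Set.range s) := by rw [hsspan]; trivial
    obtain ⟨a, ha⟩ := (Submodule.mem_span_range_iff_exists_fun ℤ_[p]).mp hm
    refine ⟨fun i => PadicInt.toZModPow n (a i), ?_⟩
    rw [Submodule.Quotient.eq]
    have key : (∑ i, ((((PadicInt.toZModPow n (a i)).val : ℤ)) • s i)) - m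
        = ∑ i, ((((PadicInt.toZModPow n (a i)).val : ℤ_[p])) - a i) • s i := by
      simp_rw [hbz]
      rw [← ha, ← Finset.sum_sub_distrib]
      exact Finset.sum_congr rfl fun i _ => (sub_smul _ _ _).symm
    rw [key]
    refine Submodule.sum_mem _ fun i _ => ?_
    obtain ⟨d, hd⟩ : ∃ d, (((PadicInt.toZModPow n (a i)).val : ℤ_[p])) - a i
        = (p : ℤ_[p]) ^ n * d := by
      have h1 : PadicInt.toZModPow n ((((PadicInt.toZModPow n (a i)).val : ℕ)) : ℤ_[p])
          = PadicInt.toZModPow n (a i) := by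
        rw [map_natCast]
        exact ZMod.natCast_rightInverse _
      have h2 : ((((PadicInt.toZModPow n (a i)).val : ℤ_[p])) - a i)
          ∈ RingHom.ker (PadicInt.toZModPow n) := by
        rw [RingHom.mem_ker, map_sub, h1, sub_self]
      rw [PadicInt.ker_toZModPow, Ideal.mem_span_singleton] at h2
      obtain ⟨d, hd⟩ := h2
      exact ⟨d, hd⟩
    rw [hd]
    exact hpn n d (s i)
  -- transvection units
  let tunit : ∀ (i j : Fin 2), i ≠ j → F → GL (Fin 2) F := fun i j hij c =>
    ⟨Matrix.transvection i j c, Matrix.transvection i j (-c),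
     by rw [Matrix.transvection_mul_transvection_same i j hij, add_neg_cancel,
       Matrix.transvection_zero],
     by rw [Matrix.transvection_mul_transvection_same i j hij, neg_add_cancel,
       Matrix.transvection_zero]⟩
  have htpow : ∀ (i j : Fin 2) (hij : i ≠ j) (c : F) (m : ℕ),
      tunit i j hij ((m : F) * c) = tunit i j hij c ^ m := by
    intro i j hij c m
    induction m with
    | zero => exact Units.ext (by simp [tunit])
    | succ m ih =>
      rw [pow_succ, ← ih]
      refine Units.ext ?_
      show Matrix.transvection i j ((((m + 1 : ℕ)) : F) * c)
          = Matrix.transvection i j ((m : F) * c) * Matrix.transvection i j c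
      rw [Matrix.transvection_mul_transvection_same i j hij]
      push_cast
      ring_nf
  have hkill : ∀ (i j : Fin 2) (hij : i ≠ j) (c : F), ρ (tunit i j hij c) = 1 := by
    intro i j hij c
    have h1 : rmon (tunit i j hij c) = 1 := by
      refine kill_aux I₀ hbot hfin rmon _ (fun N hN => ⟨tunit i j hij (c / N), ?_⟩)
      have hN0 : (N : F) ≠ 0 := Nat.cast_ne_zero.mpr hN.ne'
      rw [← htpow i j hij (c / (N : F)) N, mul_comm ((N : ℕ) : F) (c / (N : F)),
        div_mul_cancel₀ c hN0]
    apply LinearMap.ext_on hspan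
    intro v hv
    rw [Module.End.one_apply]
    exact congrArg Subtype.val (DFunLike.congr_fun h1 (⟨v, hv⟩ : ↥Λ))
  -- every element of GL₂ has the same image as a diagonal unit
  have hdiag : ∀ g : GL (Fin 2) F, ∃ (u : GL (Fin 2) F) (d : Fin 2 → F),
      (u : Matrix (Fin 2) (Fin 2) F) = Matrix.diagonal d ∧ ρ g = ρ u := by
    intro g
    obtain ⟨Ls, Ls', d, hM⟩ :=
      Matrix.Pivot.exists_list_transvec_mul_diagonal_mul_list_transvec
        (g : Matrix (Fin 2) (Fin 2) F)
    let tu : Matrix.TransvectionStruct (Fin 2) F → GL (Fin 2) F := fun t =>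
      tunit t.i t.j t.hij t.c
    have htu : ∀ t : Matrix.TransvectionStruct (Fin 2) F,
        ((tu t : GL (Fin 2) F) : Matrix (Fin 2) (Fin 2) F) = t.toMatrix := fun t => rfl
    have hval : ∀ l : List (Matrix.TransvectionStruct (Fin 2) F),
        (((l.map tu).prod : GL (Fin 2) F) : Matrix (Fin 2) (Fin 2) F)
          = (l.map Matrix.TransvectionStruct.toMatrix).prod := by
      intro l
      have hcoe : (((l.map tu).prod : GL (Fin 2) F) : Matrix (Fin 2) (Fin 2) F)
          = ((l.map tu).map Units.val).prod :=
        (List.prod_hom (l.map tu) (Units.coeHom (Matrix (Fin 2) (Fin 2) F))).symm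
      rw [hcoe, List.map_map]
      rfl
    have hρ1 : ∀ l : List (Matrix.TransvectionStruct (Fin 2) F), ρ (l.map tu).prod = 1 := by
      intro l
      rw [map_list_prod]
      refine List.prod_eq_one ?_
      intro x hx
      simp only [List.map_map, List.mem_map, Function.comp] at hx
      obtain ⟨t, -, rfl⟩ := hx
      exact hkill t.i t.j t.hij t.c
    set P := (Ls.map tu).prod with hP
    set Q := (Ls'.map tu).prod with hQ
    refine ⟨P⁻¹ * g * Q⁻¹, d, ?_, ?_⟩
    · have e1 : ((P⁻¹ : GL (Fin 2) F) : Matrix (Fin 2) (Fin 2) F)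
          * ((P : GL (Fin 2) F) : Matrix (Fin 2) (Fin 2) F) = 1 := Units.inv_mul P
      have e2 : ((Q : GL (Fin 2) F) : Matrix (Fin 2) (Fin 2) F)
          * ((Q⁻¹ : GL (Fin 2) F) : Matrix (Fin 2) (Fin 2) F) = 1 := Units.mul_inv Q
      show ((P⁻¹ * g * Q⁻¹ : GL (Fin 2) F) : Matrix (Fin 2) (Fin 2) F) = Matrix.diagonal d
      rw [Units.val_mul, Units.val_mul, hM, ← hval Ls, ← hval Ls']
      simp only [← mul_assoc]
      rw [e1, one_mul, mul_assoc, e2, mul_one]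
    · have hg : g = P * (P⁻¹ * g * Q⁻¹) * Q := by group
      conv_lhs => rw [hg]
      rw [map_mul, map_mul, show ρ P = 1 from hρ1 Ls, show ρ Q = 1 from hρ1 Ls',
        one_mul, mul_one]
  have hcomm : ∀ g h : GL (Fin 2) F, ρ g * ρ h = ρ h * ρ g := by
    intro g h
    obtain ⟨u, d, hu, hgu⟩ := hdiag g
    obtain ⟨w, e, hw, hhw⟩ := hdiag h
    have huw : u * w = w * u := Units.ext (by
      show (u : Matrix (Fin 2) (Fin 2) F) * w = (w : Matrix (Fin 2) (Fin 2) F) * u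
      rw [hu, hw, Matrix.diagonal_mul_diagonal, Matrix.diagonal_mul_diagonal,
        show (fun i => d i * e i) = fun i => e i * d i from funext fun i => mul_comm _ _])
    rw [hgu, hhw, ← map_mul, ← map_mul, huw]
  -- Schur / absolute irreducibility endgame
  obtain ⟨hnt, hirr⟩ := habs (AlgebraicClosure L)
  haveI : Nontrivial ((AlgebraicClosure L) ⊗[L] V) := by
    by_contra hc
    rw [not_nontrivial_iff_subsingleton] at hc
    exact hnt (Subsingleton.elim _ _)
  have hscal : ∀ g : GL (Fin 2) F, ∃ μ : AlgebraicClosure L,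
      ∀ x : (AlgebraicClosure L) ⊗[L] V,
        LinearMap.baseChange (AlgebraicClosure L) (ρ g) x = μ • x := by
    intro g
    obtain ⟨μ, hμ⟩ := Module.End.exists_eigenvalue
      (LinearMap.baseChange (AlgebraicClosure L) (ρ g))
    refine ⟨μ, ?_⟩
    have hU := hirr (Module.End.eigenspace
      (LinearMap.baseChange (AlgebraicClosure L) (ρ g)) μ) ?_
    · rcases hU with hb | ht
      · exact absurd hb hμ
      · intro x
        have hx : x ∈ Module.End.eigenspace
            (LinearMap.baseChange (AlgebraicClosure L) (ρ g)) μ := by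
          rw [ht]; trivial
        exact Module.End.mem_eigenspace_iff.mp hx
    · intro h x hx
      rw [Module.End.mem_eigenspace_iff] at hx ⊢
      have h2 : LinearMap.baseChange (AlgebraicClosure L) (ρ g)
            * LinearMap.baseChange (AlgebraicClosure L) (ρ h)
          = LinearMap.baseChange (AlgebraicClosure L) (ρ h)
            * LinearMap.baseChange (AlgebraicClosure L) (ρ g) := by
        rw [← LinearMap.baseChange_mul, ← LinearMap.baseChange_mul, hcomm g h]
      have hcom := DFunLike.congr_fun h2 x
      rw [Module.End.mul_apply, Module.End.mul_apply] at hcom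
      rw [hcom, hx, map_smul]
  obtain ⟨w, hw⟩ := exists_ne (0 : (AlgebraicClosure L) ⊗[L] V)
  have hsp := hirr (Submodule.span (AlgebraicClosure L) {w}) ?_
  swap
  · intro g x hx
    obtain ⟨μ, hμ⟩ := hscal g
    rw [hμ x]
    exact Submodule.smul_mem _ μ hx
  rcases hsp with hb | ht
  · exact absurd (by rwa [Submodule.span_singleton_eq_bot] at hb) hw
  · have h1 : Module.finrank (AlgebraicClosure L) ((AlgebraicClosure L) ⊗[L] V) = 1 := by
      rw [← finrank_top, ← ht]
      exact finrank_span_singleton hw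
    rw [← Module.finrank_baseChange (R := AlgebraicClosure L) (S := L) (M' := V)]
    exact h1
end
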